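/- arXiv:1605.05615 — 6 statements merged into one kernel-verified Lean document; each statement's English description precedes it below -/
import Mathlib

section
/- Let τ < ∞ and [t₁,t₂] ⊂ [0,τ). The map ψ : D̃[t₁,t₂] → D[t₁,t₂], ψ(θ)(s) = (1/θ(s))∫_s^τ θ(u) du, is Hadamard-differentiable at every θ ∈ C̃[t₁,t₂] tangentially to C²[t₁,τ] with derivative (dψ(θ)·h)(s) = (1/θ(s))∫_s^τ h(u) du − h(s)∫_s^τ θ(u) du / θ(s)². Explicitly: for every sequence tₙ ↓ 0, every h ∈ C²[t₁,τ], and every sequence (hₙ) of bounded functions in D[t₁,τ] with sup_{u∈[t₁,τ]}|hₙ(u) − h(u)| → 0 and θ + tₙhₙ ∈ D̃[t₁,t₂] for all n, one has sup_{s∈[t₁,t₂]} | (ψ(θ + tₙhₙ)(s) − ψ(θ)(s))/tₙ − (dψ(θ)·h)(s) | → 0 as n → ∞. -/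
open MeasureTheory Filter Set intervalIntegral

noncomputable section

/-- The mean-residual-lifetime functional `ψ(θ)(s) = (1/θ(s)) ∫_s^τ θ(u) du`. -/
def mrlFunctional (τ : ℝ) (θ : ℝ → ℝ) (s : ℝ) : ℝ :=
  (1 / θ s) * ∫ u in s..τ, θ u

/-- The candidate Hadamard derivative
`(dψ(θ)·h)(s) = (1/θ(s)) ∫_s^τ h(u) du − h(s) ∫_s^τ θ(u) du / θ(s)²`. -/
def mrlDerivative (τ : ℝ) (θ h : ℝ → ℝ) (s : ℝ) : ℝ :=
  (1 / θ s) * (∫ u in s..τ, h u) - h s * (∫ u in s..τ, θ u) / (θ s) ^ 2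

/-- A bounded right-continuous function on `[t₁, τ]` is interval integrable. -/
lemma cadlag_intervalIntegrable (t₁ τ : ℝ) (ht : t₁ ≤ τ) (g : ℝ → ℝ) (M : ℝ)
    (hM : ∀ u ∈ Icc t₁ τ, |g u| ≤ M)
    (hrc : ∀ u ∈ Ico t₁ τ, ContinuousWithinAt g (Ici u) u) :
    IntervalIntegrable g MeasureTheory.volume t₁ τ := by
  rw [intervalIntegrable_iff_integrableOn_Ico_of_le ht]
  set gk : ℕ → ℝ → ℝ := fun k u => g ((⌈(2:ℝ)^k * u⌉ : ℤ) / (2:ℝ)^k) with hgk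
  have hgkm : ∀ k, Measurable (gk k) := by
    intro k
    have : gk k = (fun j : ℤ => g ((j : ℝ) / (2:ℝ)^k)) ∘ (fun u : ℝ => ⌈(2:ℝ)^k * u⌉) := rfl
    rw [this]
    exact measurable_from_top.comp (Int.measurable_ceil.comp (measurable_id.const_mul _))
  have hlim : ∀ u ∈ Ico t₁ τ, Tendsto (fun k => gk k u) atTop (nhds (g u)) := by
    intro u hu
    have hseq : Tendsto (fun k : ℕ => ((⌈(2:ℝ)^k * u⌉ : ℤ) : ℝ) / (2:ℝ)^k) atTop
        (nhdsWithin u (Ici u)) := by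
      rw [tendsto_nhdsWithin_iff]
      constructor
      · apply tendsto_of_tendsto_of_tendsto_of_le_of_le (g := fun _ : ℕ => u)
          (h := fun k : ℕ => u + (1/2 : ℝ)^k)
        · exact tendsto_const_nhds
        · have : Tendsto (fun k : ℕ => u + (1/2 : ℝ)^k) atTop (nhds (u + 0)) :=
            tendsto_const_nhds.add
              (tendsto_pow_atTop_nhds_zero_of_lt_one (by norm_num) (by norm_num))
          simpa using this
        · intro k
          have h2k : (0:ℝ) < (2:ℝ)^k := by positivity
          rw [le_div_iff₀ h2k]
          calc u * 2^k = (2:ℝ)^k * u := by ring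
            _ ≤ ⌈(2:ℝ)^k * u⌉ := Int.le_ceil _
        · intro k
          have h2k : (0:ℝ) < (2:ℝ)^k := by positivity
          rw [div_le_iff₀ h2k]
          have := (Int.ceil_lt_add_one ((2:ℝ)^k * u)).le
          calc ((⌈(2:ℝ)^k * u⌉ : ℤ) : ℝ) ≤ (2:ℝ)^k * u + 1 := this
            _ = (u + (1/2:ℝ)^k) * 2^k := by rw [add_mul, ← mul_pow]; norm_num; ring
      · apply Eventually.of_forall
        intro k
        have h2k : (0:ℝ) < (2:ℝ)^k := by positivity
        have : u ≤ ((⌈(2:ℝ)^k * u⌉ : ℤ) : ℝ) / (2:ℝ)^k := by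
          rw [le_div_iff₀ h2k]
          calc u * 2^k = (2:ℝ)^k * u := by ring
            _ ≤ ⌈(2:ℝ)^k * u⌉ := Int.le_ceil _
        exact this
    exact (hrc u hu).tendsto.comp hseq
  have hmeas : AEStronglyMeasurable g (volume.restrict (Ico t₁ τ)) := by
    apply aestronglyMeasurable_of_tendsto_ae atTop
      (fun k => (hgkm k).aestronglyMeasurable)
    rw [ae_restrict_iff' measurableSet_Ico]
    exact ae_of_all _ hlim
  apply Integrable.mono' (integrable_const M) hmeas
  rw [ae_restrict_iff' measurableSet_Ico]
  exact ae_of_all _ fun u hu => hM u ⟨hu.1, hu.2.le⟩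

/-- Pure algebraic estimate for the difference quotient. -/
lemma mrl_est_aux {c K H Θ ε δ a an A B Bn b bn : ℝ}
    (hc : 0 < c) (ha : c ≤ |a|) (han : c/2 ≤ |an|)
    (hA : |A| ≤ K*Θ) (hB : |B| ≤ K*H) (hb : |b| ≤ H)
    (hBn : |Bn - B| ≤ K*ε) (hbn : |bn - b| ≤ ε) (haan : |a - an| ≤ δ)
    (hK : 0 ≤ K) (hH : 0 ≤ H) (hΘ : 0 ≤ Θ) (hε : 0 ≤ ε) (hδ : 0 ≤ δ) :
    |(Bn/an - bn*A/(an*a)) - (B/a - b*A/a^2)| ≤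
      2*K/c*ε + 2*K*H/c^2*δ + 2*K*Θ/c^2*ε + 2*K*H*Θ/c^3*δ := by
  have ha0 : a ≠ 0 := fun h0 => by simp [h0] at ha; linarith
  have han0 : an ≠ 0 := fun h0 => by simp [h0] at han; linarith
  have key : (Bn/an - bn*A/(an*a)) - (B/a - b*A/a^2)
      = (Bn - B)/an + B*(a-an)/(an*a) - (bn-b)*A/(an*a) - b*A*(a-an)/(an*a^2) := by
    field_simp
    ring
  rw [key]
  have h1 : |(Bn - B)/an| ≤ 2*K/c*ε := by
    rw [abs_div]
    have e : 2*K/c*ε = (K*ε)/(c/2) := by field_simp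
    rw [e]
    exact div_le_div₀ (by positivity) hBn (by positivity) han
  have h2 : |B*(a-an)/(an*a)| ≤ 2*K*H/c^2*δ := by
    rw [abs_div, abs_mul, abs_mul]
    have e : 2*K*H/c^2*δ = ((K*H)*δ)/((c/2)*c) := by field_simp
    rw [e]
    exact div_le_div₀ (by positivity)
      (mul_le_mul hB haan (abs_nonneg _) (by positivity)) (by positivity)
      (mul_le_mul han ha hc.le (abs_nonneg _))
  have h3 : |(bn-b)*A/(an*a)| ≤ 2*K*Θ/c^2*ε := by
    rw [abs_div, abs_mul, abs_mul]
    have e : 2*K*Θ/c^2*ε = (ε*(K*Θ))/((c/2)*c) := by field_simp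
    rw [e]
    exact div_le_div₀ (by positivity)
      (mul_le_mul hbn hA (abs_nonneg _) hε) (by positivity)
      (mul_le_mul han ha hc.le (abs_nonneg _))
  have h4 : |b*A*(a-an)/(an*a^2)| ≤ 2*K*H*Θ/c^3*δ := by
    rw [abs_div, abs_mul, abs_mul, abs_mul, abs_pow]
    have e : 2*K*H*Θ/c^3*δ = ((H*(K*Θ))*δ)/((c/2)*c^2) := by field_simp
    rw [e]
    exact div_le_div₀ (by positivity)
      (mul_le_mul (mul_le_mul hb hA (abs_nonneg _) hH) haan (abs_nonneg _) (by positivity))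
      (by positivity)
      (mul_le_mul han (pow_le_pow_left₀ hc.le ha 2) (by positivity) (abs_nonneg _))
  have e1 := abs_le.mp h1
  have e2 := abs_le.mp h2
  have e3 := abs_le.mp h3
  have e4 := abs_le.mp h4
  rw [abs_le]
  constructor <;> linarith [e1.1, e1.2, e2.1, e2.2, e3.1, e3.2, e4.1, e4.2]



/-- Hadamard differentiability of the mean-residual-lifetime functional `ψ` at
`θ ∈ C̃[t₁,t₂]` tangentially to `C²[t₁,τ]`: for every sequence `tₙ ↓ 0`, every
`h ∈ C²[t₁,τ]` and every sequence `hₙ` of bounded càdlàg functions on `[t₁,τ]` with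
`sup_{[t₁,τ]} |hₙ − h| → 0` and `θ + tₙ hₙ ∈ D̃[t₁,t₂]` for all `n`, the difference quotients
`(ψ(θ + tₙhₙ) − ψ(θ))/tₙ` converge uniformly on `[t₁,t₂]` to `dψ(θ)·h`. -/
theorem mrl_functional_hadamard_differentiable
    (t₁ t₂ τ : ℝ) (ht₁ : 0 ≤ t₁) (ht₁₂ : t₁ ≤ t₂) (ht₂τ : t₂ < τ)
    -- θ ∈ C̃[t₁,t₂] : continuous on [t₁,τ] and bounded away from 0 on [t₁,t₂]
    (θ : ℝ → ℝ) (hθcont : ContinuousOn θ (Icc t₁ τ))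
    (hθpos : ∃ c > (0 : ℝ), ∀ s ∈ Icc t₁ t₂, c ≤ |θ s|)
    -- the sequence tₙ ↓ 0
    (tseq : ℕ → ℝ) (htpos : ∀ n, 0 < tseq n) (htanti : Antitone tseq)
    (htlim : Tendsto tseq atTop (nhds 0))
    -- h ∈ C²[t₁,τ]
    (h : ℝ → ℝ) (hh : ContDiffOn ℝ 2 h (Icc t₁ τ))
    -- hₙ : a sequence of bounded càdlàg functions on [t₁,τ]
    (hn : ℕ → ℝ → ℝ)
    (hbdd : ∀ n, ∃ M : ℝ, ∀ u ∈ Icc t₁ τ, |hn n u| ≤ M)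
    (hrc : ∀ n, ∀ u ∈ Ico t₁ τ, ContinuousWithinAt (hn n) (Ici u) u)
    (hll : ∀ n, ∀ u ∈ Ioc t₁ τ, ∃ l : ℝ, Tendsto (hn n) (nhdsWithin u (Iio u)) (nhds l))
    -- sup_{[t₁,τ]} |hₙ − h| → 0
    (hconv : Tendsto (fun n => sSup ((fun u => |hn n u - h u|) '' Icc t₁ τ)) atTop (nhds 0))
    -- θ + tₙ hₙ ∈ D̃[t₁,t₂] : bounded away from 0 on [t₁,t₂]
    (hmem : ∀ n, ∃ c > (0 : ℝ), ∀ s ∈ Icc t₁ t₂, c ≤ |θ s + tseq n * hn n s|) :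
    TendstoUniformlyOn
      (fun n s => (mrlFunctional τ (fun u => θ u + tseq n * hn n u) s
          - mrlFunctional τ θ s) / tseq n)
      (mrlDerivative τ θ h) atTop (Icc t₁ t₂) := by
  obtain ⟨c, hc, hcθ⟩ := hθpos
  have ht₁τ : t₁ ≤ τ := le_trans ht₁₂ ht₂τ.le
  set K := τ - t₁ with hKdef
  have hKnn : 0 ≤ K := by simp [hKdef]; linarith
  have hhcont : ContinuousOn h (Icc t₁ τ) := hh.continuousOn
  obtain ⟨H₀, hH₀⟩ := isCompact_Icc.exists_bound_of_continuousOn hhcont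
  set H := max H₀ 0 with hHdef
  have hHnn : 0 ≤ H := le_max_right _ _
  have hH : ∀ u ∈ Icc t₁ τ, |h u| ≤ H := fun u hu =>
    le_trans (hH₀ u hu) (le_max_left _ _)
  obtain ⟨Θ₀, hΘ₀⟩ := isCompact_Icc.exists_bound_of_continuousOn hθcont
  set Θ := max Θ₀ 0 with hΘdef
  have hΘnn : 0 ≤ Θ := le_max_right _ _
  have hΘ : ∀ u ∈ Icc t₁ τ, |θ u| ≤ Θ := fun u hu =>
    le_trans (hΘ₀ u hu) (le_max_left _ _)
  set ε := fun n => sSup ((fun u => |hn n u - h u|) '' Icc t₁ τ) with hεdef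
  have hεb : ∀ n, ∀ u ∈ Icc t₁ τ, |hn n u - h u| ≤ ε n := by
    intro n u hu
    apply le_csSup
    · obtain ⟨M, hM⟩ := hbdd n
      refine ⟨M + H, ?_⟩
      rintro x ⟨v, hv, rfl⟩
      calc |hn n v - h v| ≤ |hn n v| + |h v| := abs_sub _ _
        _ ≤ M + H := add_le_add (hM v hv) (hH v hv)
    · exact mem_image_of_mem _ hu
  have hεnn : ∀ n, 0 ≤ ε n := fun n =>
    le_trans (abs_nonneg _) (hεb n t₁ ⟨le_refl _, ht₁τ⟩)
  have hhnb : ∀ n, ∀ u ∈ Icc t₁ τ, |hn n u| ≤ H + ε n := by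
    intro n u hu
    calc |hn n u| = |(hn n u - h u) + h u| := by ring_nf
      _ ≤ |hn n u - h u| + |h u| := abs_add_le _ _
      _ ≤ ε n + H := add_le_add (hεb n u hu) (hH u hu)
      _ = H + ε n := by ring
  set δ := fun n => tseq n * (H + ε n) with hδdef
  have hδnn : ∀ n, 0 ≤ δ n := fun n =>
    mul_nonneg (htpos n).le (add_nonneg hHnn (hεnn n))
  have hδlim : Tendsto δ atTop (nhds 0) := by
    have := htlim.mul (tendsto_const_nhds (x := H) (f := atTop).add hconv)
    simpa using this
  -- integrability on [t₁, τ]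
  have hθint : IntervalIntegrable θ volume t₁ τ :=
    (hθcont.mono (by rw [uIcc_of_le ht₁τ])).intervalIntegrable
  have hhint : IntervalIntegrable h volume t₁ τ :=
    (hhcont.mono (by rw [uIcc_of_le ht₁τ])).intervalIntegrable
  have hnint : ∀ n, IntervalIntegrable (hn n) volume t₁ τ := fun n =>
    cadlag_intervalIntegrable t₁ τ ht₁τ (hn n) (H + ε n) (hhnb n) (hrc n)
  -- bound sequence
  set bnd := fun n => 2*K/c*ε n + 2*K*H/c^2*δ n + 2*K*Θ/c^2*ε n + 2*K*H*Θ/c^3*δ n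
    with hbnddef
  have hbndlim : Tendsto bnd atTop (nhds 0) := by
    have := (((hconv.const_mul (2*K/c)).add (hδlim.const_mul (2*K*H/c^2))).add
      (hconv.const_mul (2*K*Θ/c^2))).add (hδlim.const_mul (2*K*H*Θ/c^3))
    simpa using this
  rw [Metric.tendstoUniformlyOn_iff]
  intro r hr
  have hev1 : ∀ᶠ n in atTop, δ n < c/2 := hδlim.eventually_lt_const (by linarith)
  have hev2 : ∀ᶠ n in atTop, bnd n < r := hbndlim.eventually_lt_const hr
  filter_upwards [hev1, hev2] with n hδn hbndn
  intro s hs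
  have hs' : s ∈ Icc t₁ τ := ⟨hs.1, le_trans hs.2 ht₂τ.le⟩
  have hsub : uIcc s τ ⊆ uIcc t₁ τ := by
    rw [uIcc_of_le hs'.2, uIcc_of_le ht₁τ]
    exact Icc_subset_Icc hs'.1 le_rfl
  have hιsub : Set.uIoc s τ ⊆ Icc t₁ τ := by
    rw [uIoc_of_le hs'.2]
    exact fun x hx => ⟨le_trans hs'.1 hx.1.le, hx.2⟩
  have hθs : IntervalIntegrable θ volume s τ := hθint.mono_set hsub
  have hhs : IntervalIntegrable h volume s τ := hhint.mono_set hsub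
  have hns : IntervalIntegrable (hn n) volume s τ := (hnint n).mono_set hsub
  set a := θ s with hadef
  set an := θ s + tseq n * hn n s with handef
  set b := h s with hbdef
  set bn := hn n s with hbndef
  set A := ∫ u in s..τ, θ u with hAdef
  set B := ∫ u in s..τ, h u with hBdef
  set Bn := ∫ u in s..τ, hn n u with hBndef
  have ha : c ≤ |a| := hcθ s hs
  have haan : |a - an| ≤ δ n := by
    have : a - an = -(tseq n * bn) := by rw [handef]; ring
    rw [this, abs_neg, abs_mul, abs_of_pos (htpos n)]
    exact mul_le_mul_of_nonneg_left (hhnb n s hs') (htpos n).le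
  have han : c/2 ≤ |an| := by
    have h1 : |a| - |an| ≤ |a - an| := abs_sub_abs_le_abs_sub a an
    linarith
  have ha0 : a ≠ 0 := fun h0 => by rw [h0] at ha; simp at ha; linarith
  have han0 : an ≠ 0 := fun h0 => by rw [h0] at han; simp at han; linarith
  have hτs : |τ - s| ≤ K := by
    rw [abs_of_nonneg (by linarith [hs'.2] : (0:ℝ) ≤ τ - s)]
    simp only [hKdef]
    linarith [hs'.1]
  have hA : |A| ≤ K * Θ := by
    have h0 : |A| ≤ Θ * |τ - s| := by
      have := norm_integral_le_of_norm_le_const (a := s) (b := τ) (C := Θ) (f := θ)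
        (fun x hx => by rw [Real.norm_eq_abs]; exact hΘ x (hιsub hx))
      rwa [Real.norm_eq_abs] at this
    calc |A| ≤ Θ * |τ - s| := h0
      _ ≤ Θ * K := mul_le_mul_of_nonneg_left hτs hΘnn
      _ = K * Θ := mul_comm _ _
  have hB : |B| ≤ K * H := by
    have h0 : |B| ≤ H * |τ - s| := by
      have := norm_integral_le_of_norm_le_const (a := s) (b := τ) (C := H) (f := h)
        (fun x hx => by rw [Real.norm_eq_abs]; exact hH x (hιsub hx))
      rwa [Real.norm_eq_abs] at this
    calc |B| ≤ H * |τ - s| := h0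
      _ ≤ H * K := mul_le_mul_of_nonneg_left hτs hHnn
      _ = K * H := mul_comm _ _
  have hBn : |Bn - B| ≤ K * ε n := by
    have hsubI : Bn - B = ∫ u in s..τ, (hn n u - h u) :=
      (intervalIntegral.integral_sub hns hhs).symm
    rw [hsubI]
    have h0 : |∫ u in s..τ, (hn n u - h u)| ≤ ε n * |τ - s| := by
      have := norm_integral_le_of_norm_le_const (a := s) (b := τ) (C := ε n)
        (f := fun u => hn n u - h u)
        (fun x hx => by rw [Real.norm_eq_abs]; exact hεb n x (hιsub hx))
      rwa [Real.norm_eq_abs] at this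
    calc |∫ u in s..τ, (hn n u - h u)| ≤ ε n * |τ - s| := h0
      _ ≤ ε n * K := mul_le_mul_of_nonneg_left hτs (hεnn n)
      _ = K * ε n := mul_comm _ _
  have hb : |b| ≤ H := hH s hs'
  have hbn : |bn - b| ≤ ε n := hεb n s hs'
  -- the key identity
  have hsplit : (∫ u in s..τ, (θ u + tseq n * hn n u)) = A + tseq n * Bn := by
    rw [intervalIntegral.integral_add hθs (hns.const_mul _),
      intervalIntegral.integral_const_mul]
  have key : (mrlFunctional τ (fun u => θ u + tseq n * hn n u) s
      - mrlFunctional τ θ s) / tseq n = Bn/an - bn*A/(an*a) := by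
    have htn0 : tseq n ≠ 0 := (htpos n).ne'
    simp only [mrlFunctional]
    rw [hsplit]
    rw [show θ s + tseq n * hn n s = an from rfl, show θ s = a from rfl,
      show (∫ u in s..τ, θ u) = A from rfl]
    field_simp
    ring
  have keyD : mrlDerivative τ θ h s = B/a - b*A/a^2 := by
    simp only [mrlDerivative, ← hAdef, ← hBdef, ← hadef, ← hbdef]
    field_simp
  rw [Real.dist_eq, key, keyD, abs_sub_comm]
  calc |(Bn/an - bn*A/(an*a)) - (B/a - b*A/a^2)| ≤ bnd n :=
      mrl_est_aux hc ha han hA hB hb hBn hbn haan hKnn hHnn hΘnn (hεnn n) (hδnn n)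
    _ < r := hbndn

end
end

section
/- Let S : [0,τ] → [0,1] be continuous and nonincreasing with S(0)=1 and τ = inf{t ≥ 0 : S(t) = 0} ∈ (0,∞], and let G : [0,∞) → [0,1] be nonincreasing and right-continuous with −∫₀^τ dS(w)/G(w−) < ∞. Define Γ(u,v) = −S(u)S(v) ∫_{(0,u∧v]} dS(w) / (S(w)² G(w−)). Then Γ(u,v) → 0 as u,v → τ (i.e., as u ∧ v ↑ τ). -/
open MeasureTheory Filter Set
open scoped ENNReal Topology

noncomputable section

/-- with `Γ(u,v) = −S(u)S(v) ∫_{(0,u∧v]} dS(w)/(S(w)² G(w−))`, under the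
condition `−∫₀^τ dS(w)/G(w−) < ∞` one has `Γ(u,v) → 0` as `u ∧ v ↑ τ`.  The Lebesgue–Stieltjes
measure `−dS` is the measure of the nondecreasing right-continuous function `F = 1 − S`. -/
theorem gamma_vanishes_at_endpoint
    (S : ℝ → ℝ) (hScont : Continuous S) (hSanti : Antitone S)
    (hS0 : S 0 = 1) (hSneg : ∀ t ≤ (0 : ℝ), S t = 1)
    (hSrange : ∀ t, 0 ≤ S t ∧ S t ≤ 1)
    (hSlim : Tendsto S atTop (nhds 0))
    (G : ℝ → ℝ) (hGanti : AntitoneOn G (Ici 0))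
    (hGrange : ∀ t ∈ Ici (0 : ℝ), 0 ≤ G t ∧ G t ≤ 1)
    (hGrc : ∀ t ∈ Ici (0 : ℝ), ContinuousWithinAt G (Ici t) t)
    (τ : ℝ≥0∞) (hτpos : 0 < τ)
    (hτ : τ = sInf {u : ℝ≥0∞ | ∃ r : ℝ, 0 ≤ r ∧ S r = 0 ∧ u = ENNReal.ofReal r})
    -- the Lebesgue–Stieltjes measure −dS, i.e. the measure of F = 1 − S
    (F : StieltjesFunction ℝ) (hF : ∀ x : ℝ, F x = 1 - S x)
    -- condition (C1): −∫₀^τ dS(w)/G(w−) < ∞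
    (hC1 : ∫⁻ w in {w : ℝ | 0 < w ∧ ENNReal.ofReal w ≤ τ},
        (ENNReal.ofReal (Function.leftLim G w))⁻¹ ∂F.measure < ⊤)
    (Γ : ℝ → ℝ → ℝ)
    (hΓ : ∀ u v : ℝ, Γ u v = S u * S v *
        (∫⁻ w in Ioc 0 (min u v),
          (ENNReal.ofReal (S w ^ 2 * Function.leftLim G w))⁻¹ ∂F.measure).toReal) :
    ∀ ε > (0 : ℝ), ∃ t₀ : ℝ, 0 ≤ t₀ ∧ ENNReal.ofReal t₀ < τ ∧
      ∀ u v : ℝ, t₀ < u → t₀ < v →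
        ENNReal.ofReal u ≤ τ → ENNReal.ofReal v ≤ τ → |Γ u v| < ε := by
  intro ε hε
  -- a globally antitone modification of `G`
  set G' : ℝ → ℝ := fun t => G (max t 0) with hG'def
  have hG'anti : Antitone G' := fun x y hxy =>
    hGanti (le_max_right x 0) (le_max_right y 0) (max_le_max hxy le_rfl)
  have hG'nonneg : ∀ t, 0 ≤ G' t := fun t => (hGrange _ (le_max_right t 0)).1
  have hLL : ∀ w : ℝ, 0 < w → Function.leftLim G w = Function.leftLim G' w := by
    intro w hw
    have heq : G' =ᶠ[𝓝[<] w] G := by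
      filter_upwards [Ioo_mem_nhdsLT_of_mem (show w ∈ Ioc (0:ℝ) w from ⟨hw, le_rfl⟩)] with t ht
      simp [hG'def, max_eq_left ht.1.le]
    exact leftLim_eq_of_tendsto
      ((hG'anti.tendsto_leftLim w).congr' heq)
  have hLLnn : ∀ w, 0 ≤ Function.leftLim G' w :=
    fun w => (hG'nonneg w).trans (hG'anti.le_leftLim le_rfl)
  -- the set T
  set T : Set ℝ := {w : ℝ | 0 < w ∧ ENNReal.ofReal w ≤ τ} with hTdef
  have hTmeas : MeasurableSet T := by
    have : T = Ioi (0:ℝ) ∩ (fun w : ℝ => ENNReal.ofReal w) ⁻¹' Iic τ := rfl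
    rw [this]
    exact measurableSet_Ioi.inter (ENNReal.measurable_ofReal measurableSet_Iic)
  have htot : ∫⁻ w in T, (ENNReal.ofReal (Function.leftLim G' w))⁻¹ ∂F.measure < ⊤ := by
    have hcg : ∫⁻ w in T, (ENNReal.ofReal (Function.leftLim G w))⁻¹ ∂F.measure
        = ∫⁻ w in T, (ENNReal.ofReal (Function.leftLim G' w))⁻¹ ∂F.measure :=
      setLIntegral_congr_fun hTmeas (fun w hw => by rw [hLL w hw.1])
    rw [← hcg]; exact hC1
  -- the finite measure with density 1/G(w-) on T
  set μ' : Measure ℝ :=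
    (F.measure.restrict T).withDensity (fun w => (ENNReal.ofReal (Function.leftLim G' w))⁻¹)
    with hμ'def
  haveI hfin : IsFiniteMeasure μ' := by
    refine ⟨?_⟩
    rw [hμ'def, withDensity_apply _ MeasurableSet.univ, Measure.restrict_univ]
    exact htot
  have hμIoi : ∀ r : ℝ, μ' (Ioi r)
      = ∫⁻ w in Ioi r ∩ T, (ENNReal.ofReal (Function.leftLim G' w))⁻¹ ∂F.measure := by
    intro r
    rw [hμ'def, withDensity_apply _ measurableSet_Ioi, Measure.restrict_restrict measurableSet_Ioi]
  -- choose the split point a with small tail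
  have hsel : ∃ a : ℝ, 0 ≤ a ∧ ENNReal.ofReal a < τ ∧ μ' (Ioi a) < ENNReal.ofReal (ε / 2) := by
    have hhalf : (0:ℝ≥0∞) < ENNReal.ofReal (ε/2) := ENNReal.ofReal_pos.2 (half_pos hε)
    rcases eq_or_ne τ ⊤ with htop | htop
    · have hmono : Antitone (fun n : ℕ => Ioi ((n : ℝ))) :=
        fun m n h => Ioi_subset_Ioi (Nat.cast_le.2 h)
      have h0 : Tendsto (fun n : ℕ => μ' (Ioi ((n:ℕ):ℝ))) atTop
          (𝓝 (μ' (⋂ n : ℕ, Ioi ((n:ℕ):ℝ)))) :=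
        tendsto_measure_iInter_atTop (fun n => measurableSet_Ioi.nullMeasurableSet) hmono
          ⟨0, measure_ne_top μ' _⟩
      have hempty : (⋂ n : ℕ, Ioi ((n:ℕ):ℝ)) = ∅ := by
        ext x
        simp only [mem_iInter, mem_Ioi, mem_empty_iff_false, iff_false, not_forall, not_lt]
        obtain ⟨n, hn⟩ := exists_nat_ge x
        exact ⟨n, hn⟩
      rw [hempty, measure_empty] at h0
      obtain ⟨n, hn⟩ := (h0.eventually_lt_const hhalf).exists
      exact ⟨n, Nat.cast_nonneg n, htop ▸ ENNReal.ofReal_lt_top, hn⟩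
    · have hb0 : 0 < τ.toReal := ENNReal.toReal_pos hτpos.ne' htop
      have hτb : ENNReal.ofReal τ.toReal = τ := ENNReal.ofReal_toReal htop
      have hFc : Continuous F := by
        have : ⇑F = fun x => 1 - S x := funext hF
        rw [this]; exact continuous_const.sub hScont
      have hFb : F.measure {τ.toReal} = 0 := by
        have hll : Function.leftLim F τ.toReal = F τ.toReal :=
          leftLim_eq_of_tendsto
            ((hFc.tendsto τ.toReal).mono_left nhdsWithin_le_nhds)
        rw [F.measure_singleton, hll, sub_self, ENNReal.ofReal_zero]
      have hIci : μ' (Ici τ.toReal) = 0 := by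
        rw [hμ'def, withDensity_apply _ measurableSet_Ici,
          Measure.restrict_restrict measurableSet_Ici]
        apply setLIntegral_measure_zero
        refine measure_mono_null ?_ hFb
        rintro w ⟨hw1, hw2, hw3⟩
        have : w ≤ τ.toReal := by
          rw [← hτb] at hw3
          exact (ENNReal.ofReal_le_ofReal_iff hb0.le).1 hw3
        exact le_antisymm this hw1
      have hmono : Antitone (fun n : ℕ => Ioi (τ.toReal - 1/((n:ℝ)+1))) := by
        intro m n h
        apply Ioi_subset_Ioi
        have : 1/((n:ℝ)+1) ≤ 1/((m:ℝ)+1) := by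
          apply one_div_le_one_div_of_le (by positivity)
          exact add_le_add_left (Nat.cast_le.2 h) 1
        linarith
      have h0 : Tendsto (fun n : ℕ => μ' (Ioi (τ.toReal - 1/((n:ℝ)+1)))) atTop
          (𝓝 (μ' (⋂ n : ℕ, Ioi (τ.toReal - 1/((n:ℝ)+1))))) :=
        tendsto_measure_iInter_atTop (fun n => measurableSet_Ioi.nullMeasurableSet) hmono
          ⟨0, measure_ne_top μ' _⟩
      have hint : (⋂ n : ℕ, Ioi (τ.toReal - 1/((n:ℝ)+1))) = Ici τ.toReal := by
        ext x
        simp only [mem_iInter, mem_Ioi, mem_Ici]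
        constructor
        · intro h
          by_contra hx
          push_neg at hx
          obtain ⟨n, hn⟩ := exists_nat_one_div_lt (sub_pos.2 hx)
          have := h n
          linarith
        · intro h n
          have : 0 < 1/((n:ℝ)+1) := by positivity
          linarith
      rw [hint, hIci] at h0
      obtain ⟨n, hn⟩ := (h0.eventually_lt_const hhalf).exists
      have hpos : 0 < 1/((n:ℝ)+1) := by positivity
      refine ⟨max (τ.toReal - 1/((n:ℝ)+1)) 0, le_max_right _ _, ?_, ?_⟩
      · have hlt : max (τ.toReal - 1/((n:ℝ)+1)) 0 < τ.toReal := max_lt (by linarith) hb0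
        calc ENNReal.ofReal (max (τ.toReal - 1/((n:ℝ)+1)) 0)
            < ENNReal.ofReal τ.toReal := (ENNReal.ofReal_lt_ofReal_iff hb0).2 hlt
          _ = τ := hτb
      · exact lt_of_le_of_lt (measure_mono (Ioi_subset_Ioi (le_max_left _ _))) hn
  obtain ⟨a, ha0, haτ, htail⟩ := hsel
  rw [hμIoi] at htail
  have hSa : 0 < S a := by
    rcases (hSrange a).1.lt_or_eq with h | h
    · exact h
    · have : τ ≤ ENNReal.ofReal a := hτ.le.trans (sInf_le ⟨a, ha0, h.symm, rfl⟩)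
      exact absurd this (not_le.2 haτ)
  -- the head integral is finite
  set I₁ : ℝ≥0∞ :=
    ∫⁻ w in Ioc 0 a, (ENNReal.ofReal (S w ^ 2 * Function.leftLim G' w))⁻¹ ∂F.measure with hI₁def
  have hSa2 : (0:ℝ≥0∞) < ENNReal.ofReal (S a ^ 2) := ENNReal.ofReal_pos.2 (by positivity)
  have hI₁top : I₁ ≠ ⊤ := by
    have hb1 : I₁ ≤ (ENNReal.ofReal (S a ^ 2))⁻¹ *
        ∫⁻ w in Ioc 0 a, (ENNReal.ofReal (Function.leftLim G' w))⁻¹ ∂F.measure := by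
      rw [hI₁def, ← lintegral_const_mul' _ _ (ENNReal.inv_ne_top.2 hSa2.ne')]
      apply setLIntegral_mono' measurableSet_Ioc
      intro w hw
      have hSw : S a ≤ S w := hSanti hw.2
      have h1 : ENNReal.ofReal (S a ^ 2 * Function.leftLim G' w)
          ≤ ENNReal.ofReal (S w ^ 2 * Function.leftLim G' w) :=
        ENNReal.ofReal_le_ofReal
          (mul_le_mul_of_nonneg_right (pow_le_pow_left₀ (hSrange a).1 hSw 2) (hLLnn w))
      calc (ENNReal.ofReal (S w ^ 2 * Function.leftLim G' w))⁻¹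
          ≤ (ENNReal.ofReal (S a ^ 2 * Function.leftLim G' w))⁻¹ := ENNReal.inv_le_inv' h1
        _ = (ENNReal.ofReal (S a ^ 2))⁻¹ * (ENNReal.ofReal (Function.leftLim G' w))⁻¹ := by
            rw [ENNReal.ofReal_mul (by positivity),
              ENNReal.mul_inv (Or.inl hSa2.ne') (Or.inl ENNReal.ofReal_ne_top)]
    have hsub : Ioc (0:ℝ) a ⊆ T := fun w hw =>
      ⟨hw.1, le_trans (ENNReal.ofReal_le_ofReal hw.2) haτ.le⟩
    have hb2 : (∫⁻ w in Ioc 0 a, (ENNReal.ofReal (Function.leftLim G' w))⁻¹ ∂F.measure) < ⊤ :=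
      lt_of_le_of_lt (lintegral_mono_set hsub) htot
    exact (lt_of_le_of_lt hb1 (ENNReal.mul_lt_top (ENNReal.inv_lt_top.2 hSa2) hb2)).ne
  set C : ℝ := I₁.toReal with hCdef
  have hC0 : 0 ≤ C := ENNReal.toReal_nonneg
  have hδpos : 0 < ε / (2 * (C + 1)) := by positivity
  -- choose t₀
  have hsel2 : ∃ t₀ : ℝ, a ≤ t₀ ∧ ENNReal.ofReal t₀ < τ ∧ S t₀ < ε / (2 * (C + 1)) := by
    rcases eq_or_ne τ ⊤ with htop | htop
    · obtain ⟨t₀, ht₁, ht₂⟩ := ((hSlim.eventually_lt_const hδpos).and (eventually_ge_atTop a)).exists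
      exact ⟨t₀, ht₂, htop ▸ ENNReal.ofReal_lt_top, ht₁⟩
    · have hb0 : 0 < τ.toReal := ENNReal.toReal_pos hτpos.ne' htop
      have hτb : ENNReal.ofReal τ.toReal = τ := ENNReal.ofReal_toReal htop
      have hab : a < τ.toReal := by
        rw [← hτb] at haτ
        exact (ENNReal.ofReal_lt_ofReal_iff hb0).1 haτ
      have hSb : S τ.toReal = 0 := by
        refine le_antisymm ?_ (hSrange τ.toReal).1
        by_contra hpos
        push_neg at hpos
        obtain ⟨δ, hδ, hcont⟩ := Metric.continuousAt_iff.1 hScont.continuousAt (S τ.toReal) hpos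
        have hlt : τ < τ + ENNReal.ofReal δ :=
          ENNReal.lt_add_right htop (ENNReal.ofReal_pos.2 hδ).ne'
        have h2 : sInf {u : ℝ≥0∞ | ∃ r : ℝ, 0 ≤ r ∧ S r = 0 ∧ u = ENNReal.ofReal r}
            < τ + ENNReal.ofReal δ := lt_of_le_of_lt hτ.symm.le hlt
        obtain ⟨z, hz, hzlt⟩ := sInf_lt_iff.1 h2
        obtain ⟨r, hr0, hSr, rfl⟩ := hz
        have hrτ : τ ≤ ENNReal.ofReal r := hτ.le.trans (sInf_le ⟨r, hr0, hSr, rfl⟩)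
        have hbr : τ.toReal ≤ r := by
          rw [← hτb] at hrτ
          exact (ENNReal.ofReal_le_ofReal_iff hr0).1 hrτ
        have hrb : r < τ.toReal + δ := by
          have h3 : ENNReal.ofReal r < ENNReal.ofReal (τ.toReal + δ) := by
            rw [ENNReal.ofReal_add hb0.le hδ.le, hτb]
            exact hzlt
          exact (ENNReal.ofReal_lt_ofReal_iff (by positivity)).1 h3
        have hdist : dist r τ.toReal < δ := by
          rw [Real.dist_eq, abs_of_nonneg (sub_nonneg.2 hbr)]
          linarith
        have h4 := hcont hdist
        rw [hSr, Real.dist_eq, zero_sub, abs_neg,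
          abs_of_nonneg (hSrange τ.toReal).1] at h4
        exact lt_irrefl _ h4
      obtain ⟨η, hη, hcont⟩ := Metric.continuousAt_iff.1 hScont.continuousAt _ hδpos
      refine ⟨max a (τ.toReal - η/2), le_max_left _ _, ?_, ?_⟩
      · have hlt : max a (τ.toReal - η/2) < τ.toReal := max_lt hab (by linarith)
        calc ENNReal.ofReal (max a (τ.toReal - η/2)) < ENNReal.ofReal τ.toReal :=
            (ENNReal.ofReal_lt_ofReal_iff hb0).2 hlt
          _ = τ := hτb
      · have ht₀b : max a (τ.toReal - η/2) ≤ τ.toReal := le_of_lt (max_lt hab (by linarith))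
        have hd : dist (max a (τ.toReal - η/2)) τ.toReal < η := by
          rw [Real.dist_eq, abs_of_nonpos (by linarith)]
          have : τ.toReal - η/2 ≤ max a (τ.toReal - η/2) := le_max_right _ _
          linarith
        have h4 := hcont hd
        rw [hSb, Real.dist_eq, sub_zero] at h4
        exact lt_of_le_of_lt (le_abs_self _) h4
  obtain ⟨t₀, hat₀, ht₀τ, hSt₀⟩ := hsel2
  have ht₀0 : 0 ≤ t₀ := ha0.trans hat₀
  refine ⟨t₀, ht₀0, ht₀τ, ?_⟩
  intro u v hu hv huτ hvτ
  by_cases hSu0 : S u = 0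
  · rw [hΓ u v, hSu0, zero_mul, zero_mul, abs_zero]; exact hε
  by_cases hSv0 : S v = 0
  · rw [hΓ u v, hSv0, mul_zero, zero_mul, abs_zero]; exact hε
  have hSu : 0 < S u := (hSrange u).1.lt_of_ne (Ne.symm hSu0)
  have hSv : 0 < S v := (hSrange v).1.lt_of_ne (Ne.symm hSv0)
  set m : ℝ := min u v with hmdef
  have hmu : m ≤ u := min_le_left _ _
  have htm : t₀ < m := lt_min hu hv
  have ham : a ≤ m := hat₀.trans htm.le
  -- split the integral
  set I₂ : ℝ≥0∞ :=
    ∫⁻ w in Ioc a m, (ENNReal.ofReal (S w ^ 2 * Function.leftLim G' w))⁻¹ ∂F.measure with hI₂def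
  have hIeq : ∫⁻ w in Ioc 0 m, (ENNReal.ofReal (S w ^ 2 * Function.leftLim G w))⁻¹ ∂F.measure
      = I₁ + I₂ := by
    rw [setLIntegral_congr_fun measurableSet_Ioc
      (fun w (hw : w ∈ Ioc 0 m) => by rw [hLL w hw.1]),
      ← Ioc_union_Ioc_eq_Ioc ha0 ham,
      Measure.restrict_union (Set.Ioc_disjoint_Ioc_of_le le_rfl) measurableSet_Ioc,
      lintegral_add_measure]
  have hSuv0 : (0:ℝ) < S u * S v := mul_pos hSu hSv
  -- the tail contribution is small
  have hkey : ENNReal.ofReal (S u * S v) * I₂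
      ≤ ∫⁻ w in Ioi a ∩ T, (ENNReal.ofReal (Function.leftLim G' w))⁻¹ ∂F.measure := by
    rw [hI₂def, ← lintegral_const_mul' _ _ ENNReal.ofReal_ne_top]
    refine le_trans (setLIntegral_mono' measurableSet_Ioc fun w hw => ?_)
      (lintegral_mono_set fun w hw => ?_)
    · have hw0 : 0 < w := lt_of_le_of_lt ha0 hw.1
      have hSwu : S u ≤ S w := hSanti (hw.2.trans hmu)
      have hSwv : S v ≤ S w := hSanti (hw.2.trans (min_le_right u v))
      have hSwpos : 0 < S w := hSu.trans_le hSwu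
      rcases (hLLnn w).lt_or_eq with hL | hL
      · have hsplit : ENNReal.ofReal (S w ^ 2 * Function.leftLim G' w)
            = ENNReal.ofReal (S w ^ 2) * ENNReal.ofReal (Function.leftLim G' w) :=
          ENNReal.ofReal_mul (by positivity)
        rw [hsplit,
          ENNReal.mul_inv (Or.inl (ENNReal.ofReal_pos.2 (by positivity : (0:ℝ) < S w ^ 2)).ne')
            (Or.inl ENNReal.ofReal_ne_top), ← mul_assoc]
        have hprod : S u * S v ≤ S w ^ 2 := by
          rw [pow_two]
          exact mul_le_mul hSwu hSwv hSv.le hSwpos.le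
        calc ENNReal.ofReal (S u * S v) * (ENNReal.ofReal (S w ^ 2))⁻¹
              * (ENNReal.ofReal (Function.leftLim G' w))⁻¹
            ≤ ENNReal.ofReal (S w ^ 2) * (ENNReal.ofReal (S w ^ 2))⁻¹
              * (ENNReal.ofReal (Function.leftLim G' w))⁻¹ :=
              mul_le_mul_left (mul_le_mul_left (ENNReal.ofReal_le_ofReal hprod) _) _
          _ = (ENNReal.ofReal (Function.leftLim G' w))⁻¹ := by
              rw [ENNReal.mul_inv_cancel
                (ENNReal.ofReal_pos.2 (by positivity : (0:ℝ) < S w ^ 2)).ne'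
                ENNReal.ofReal_ne_top, one_mul]
      · have : (ENNReal.ofReal (Function.leftLim G' w))⁻¹ = ⊤ := by
          rw [← hL, ENNReal.ofReal_zero, ENNReal.inv_zero]
        rw [this]
        exact le_top
    · exact ⟨hw.1, lt_of_le_of_lt ha0 hw.1,
        le_trans (ENNReal.ofReal_le_ofReal (hw.2.trans hmu)) huτ⟩
  have hI₂lt : ENNReal.ofReal (S u * S v) * I₂ < ENNReal.ofReal (ε/2) :=
    lt_of_le_of_lt hkey htail
  have hI₂top : I₂ ≠ ⊤ := by
    intro h
    rw [h, ENNReal.mul_top (ENNReal.ofReal_pos.2 hSuv0).ne'] at hI₂lt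
    exact absurd hI₂lt (not_lt.2 le_top)
  -- final computation
  rw [hΓ u v, ← hmdef, hIeq, ENNReal.toReal_add hI₁top hI₂top, mul_add]
  have h1 : S u * S v * I₁.toReal < ε/2 := by
    have huv : S u * S v ≤ S t₀ := by
      calc S u * S v ≤ S t₀ * 1 :=
        mul_le_mul (hSanti hu.le) (hSrange v).2 (hSrange v).1 (hSrange t₀).1
        _ = S t₀ := mul_one _
    have hA : S t₀ * (C + 1) < ε / (2 * (C + 1)) * (C + 1) :=
      mul_lt_mul_of_pos_right hSt₀ (by linarith)
    have hB : ε / (2 * (C + 1)) * (C + 1) = ε / 2 := by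
      field_simp
    have hCle : S u * S v * C ≤ S t₀ * C := mul_le_mul_of_nonneg_right huv hC0
    have hC2 : S t₀ * C ≤ S t₀ * (C + 1) := by nlinarith [(hSrange t₀).1]
    rw [← hCdef]
    linarith
  have h2 : S u * S v * I₂.toReal < ε/2 := by
    have heq2 : S u * S v * I₂.toReal = (ENNReal.ofReal (S u * S v) * I₂).toReal := by
      rw [ENNReal.toReal_mul, ENNReal.toReal_ofReal hSuv0.le]
    rw [heq2]
    have := ENNReal.toReal_strict_mono ENNReal.ofReal_ne_top hI₂lt
    rwa [ENNReal.toReal_ofReal (half_pos hε).le] at this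
  have hnn : 0 ≤ S u * S v * I₁.toReal + S u * S v * I₂.toReal := by
    have := ENNReal.toReal_nonneg (a := I₁)
    have := ENNReal.toReal_nonneg (a := I₂)
    positivity
  rw [abs_of_nonneg hnn]
  linarith

end
end

section
/- For every β ∈ (0,1), almost surely: P( S*ₙ(t) ≤ β⁻¹ Ŝₙ(t) for all t ∈ [0, T*ₙ] | 𝐗 ) ≥ 1 − β. -/
noncomputable section

/-- The Kaplan–Meier estimator `Ŝₙ(t) = ∏_{i : X_{i:n} ≤ t} (1 - δ_{[i:n]}/(n-i+1))`. -/
def kmProd {n : ℕ} (x d : Fin n → ℝ) (t : ℝ) : ℝ :=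
  ∏ i ∈ Finset.univ.filter (fun i : Fin n => x (Tuple.sort x i) ≤ t),
    (1 - d (Tuple.sort x i) / ((n : ℝ) - (i.1 : ℝ)))


section Aux
open Finset MeasureTheory ProbabilityTheory
open scoped Classical

lemma downclosed_mem_iff {n : ℕ} (S : Finset (Fin n))
    (h : ∀ i j : Fin n, j ≤ i → i ∈ S → j ∈ S) (i : Fin n) :
    i ∈ S ↔ (i : ℕ) < S.card := by
  constructor
  · intro hi
    have hsub : Finset.Iic i ⊆ S := fun j hj => h i j (Finset.mem_Iic.mp hj) hi
    have := Finset.card_le_card hsub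
    rw [Fin.card_Iic] at this
    omega
  · intro hi
    by_contra hmem
    have hsub : S ⊆ Finset.filter (fun j : Fin n => (j : ℕ) < (i : ℕ)) univ := by
      intro k hk
      simp only [mem_filter, mem_univ, true_and]
      by_contra hki
      push_neg at hki
      exact hmem (h k i (by exact hki) hk)
    have hcard := Finset.card_le_card hsub
    have : (Finset.filter (fun j : Fin n => (j : ℕ) < (i : ℕ)) univ).card ≤ (i : ℕ) := by
      have : Finset.filter (fun j : Fin n => (j : ℕ) < (i : ℕ)) univ ⊆ Finset.Iio i := by
        intro k hk
        simp only [mem_filter] at hk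
        simp [Finset.mem_Iio, Fin.lt_def, hk.2]
      have h2 := Finset.card_le_card this
      rw [Fin.card_Iio] at h2
      exact h2
    omega

lemma telescope (n : ℕ) : ∀ (b a : ℕ), a < b → b ≤ n →
    ∏ s ∈ Finset.Ico a b, (1 - 1/((n:ℝ) - s)) = ((n:ℝ) - b)/((n:ℝ) - a) := by
  intro b
  induction b with
  | zero => omega
  | succ b ih =>
    intro a hab hbn
    have hbn' : (b : ℝ) < n := by exact_mod_cast Nat.lt_of_lt_of_le (Nat.lt_succ_self b) hbn
    have hnb : (n:ℝ) - b ≠ 0 := by linarith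
    rcases Nat.lt_or_ge a b with h | h
    · rw [Finset.prod_Ico_succ_top (by omega), ih a h (by omega)]
      have han : (a : ℝ) < n := by
        have : a < n := by omega
        exact_mod_cast this
      have hna : (n:ℝ) - a ≠ 0 := by linarith
      field_simp
      push_cast
      ring
    · have : a = b := by omega
      subst this
      rw [show a + 1 = a + 1 from rfl]
      rw [Finset.prod_Ico_succ_top le_rfl, Finset.Ico_self, Finset.prod_empty, one_mul]
      push_cast
      field_simp
      ring

lemma prod_fin_interval {n : ℕ} (a b : ℕ) (hb : b ≤ n) (h : ℕ → ℝ) :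
    ∏ i ∈ Finset.filter (fun i : Fin n => a ≤ (i:ℕ) ∧ (i:ℕ) < b) univ, h (i:ℕ)
      = ∏ s ∈ Finset.Ico a b, h s := by
  rcases Nat.eq_zero_or_pos n with h0 | h0
  · subst h0
    have : b = 0 := Nat.le_zero.mp hb
    subst this
    simp
  apply Finset.prod_nbij' (fun i : Fin n => (i : ℕ)) (fun s : ℕ => (⟨s % n, Nat.mod_lt _ h0⟩ : Fin n))
  · intro i hi
    simp only [mem_filter, mem_univ, true_and] at hi
    simp [Finset.mem_Ico, hi.1, hi.2]
  · intro s hs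
    simp only [Finset.mem_Ico] at hs
    have hsn : s < n := lt_of_lt_of_le hs.2 hb
    simp only [mem_filter, mem_univ, true_and]
    constructor <;> simp [Nat.mod_eq_of_lt hsn, hs.1, hs.2]
  · intro i _; ext; simp [Nat.mod_eq_of_lt i.2]
  · intro s hs
    simp only [Finset.mem_Ico] at hs
    have hsn : s < n := lt_of_lt_of_le hs.2 hb
    simp [Nat.mod_eq_of_lt hsn]
  · intro i _; rfl

variable {n : ℕ}

def YY (x : Fin n → ℝ) (v : ℝ) : ℕ := (univ.filter fun a => v ≤ x a).card
def cLT (x : Fin n → ℝ) (v : ℝ) : ℕ := (univ.filter fun a => x a < v).card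
def cLE (x : Fin n → ℝ) (v : ℝ) : ℕ := (univ.filter fun a => x a ≤ v).card
def DD (x d : Fin n → ℝ) (v : ℝ) : ℝ := ∑ a ∈ univ.filter (fun a => x a = v), d a

lemma card_filter_perm (e : Equiv.Perm (Fin n)) (p : Fin n → Prop) :
    (univ.filter fun i => p (e i)).card = (univ.filter p).card := by
  apply Finset.card_bij (fun i _ => e i)
  · intro i hi; simp only [mem_filter, mem_univ, true_and] at hi ⊢; exact hi
  · intro i hi j hj hij; exact e.injective hij
  · intro b hb
    refine ⟨e.symm b, ?_, by simp⟩
    simp only [mem_filter, mem_univ, true_and] at hb ⊢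
    simpa using hb

lemma sorted_le_iff (x : Fin n → ℝ) (v : ℝ) (i : Fin n) :
    x (Tuple.sort x i) ≤ v ↔ (i : ℕ) < cLE x v := by
  have hmono := Tuple.monotone_sort x
  have := downclosed_mem_iff (univ.filter fun i : Fin n => x (Tuple.sort x i) ≤ v)
    (fun i j hji hi => by
      simp only [mem_filter, mem_univ, true_and] at hi ⊢
      exact le_trans (hmono hji) hi) i
  simp only [mem_filter, mem_univ, true_and] at this
  rw [this, card_filter_perm (Tuple.sort x) (fun a => x a ≤ v)]
  rfl

lemma sorted_lt_iff (x : Fin n → ℝ) (v : ℝ) (i : Fin n) :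
    x (Tuple.sort x i) < v ↔ (i : ℕ) < cLT x v := by
  have hmono := Tuple.monotone_sort x
  have := downclosed_mem_iff (univ.filter fun i : Fin n => x (Tuple.sort x i) < v)
    (fun i j hji hi => by
      simp only [mem_filter, mem_univ, true_and] at hi ⊢
      exact lt_of_le_of_lt (hmono hji) hi) i
  simp only [mem_filter, mem_univ, true_and] at this
  rw [this, card_filter_perm (Tuple.sort x) (fun a => x a < v)]
  rfl

lemma sorted_eq_iff (x : Fin n → ℝ) (v : ℝ) (i : Fin n) :
    x (Tuple.sort x i) = v ↔ (cLT x v ≤ (i : ℕ) ∧ (i : ℕ) < cLE x v) := by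
  rw [← sorted_le_iff, ← not_lt (a := (i:ℕ)), ← sorted_lt_iff]
  constructor
  · rintro rfl; exact ⟨fun h => lt_irrefl _ h, le_rfl⟩
  · rintro ⟨h1, h2⟩; exact le_antisymm h2 (not_lt.mp h1)

lemma cLE_le (x : Fin n → ℝ) (v : ℝ) : cLE x v ≤ n := by
  simpa [cLE] using Finset.card_filter_le univ (fun a : Fin n => x a ≤ v)

lemma cLT_lt_cLE {x : Fin n → ℝ} {v : ℝ} {a₀ : Fin n} (h : x a₀ = v) :
    cLT x v < cLE x v := by
  apply Finset.card_lt_card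
  constructor
  · intro a ha; simp only [mem_filter, mem_univ, true_and] at ha ⊢; exact le_of_lt ha
  · intro hsub
    have : a₀ ∈ univ.filter fun a : Fin n => x a ≤ v := by simp [h]
    have := hsub this
    simp only [mem_filter, mem_univ, true_and] at this
    exact absurd h (ne_of_lt this)

lemma YY_eq (x : Fin n → ℝ) (v : ℝ) : YY x v = n - cLT x v := by
  have h := Finset.card_filter_add_card_filter_not
    (s := (univ : Finset (Fin n))) (p := fun a => x a < v)
  have h2 : (univ.filter fun a : Fin n => ¬ x a < v) = univ.filter fun a : Fin n => v ≤ x a := by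
    apply Finset.filter_congr; intro a _; simp [not_lt]
  rw [h2] at h
  simp only [Finset.card_univ, Fintype.card_fin] at h
  unfold YY cLT
  omega

lemma card_eq_fiber (x : Fin n → ℝ) (v : ℝ) :
    (univ.filter fun a : Fin n => x a = v).card = cLE x v - cLT x v := by
  have hsplit : (univ.filter fun a : Fin n => x a ≤ v)
      = (univ.filter fun a : Fin n => x a < v) ∪ (univ.filter fun a : Fin n => x a = v) := by
    ext a
    simp only [mem_filter, mem_univ, true_and, Finset.mem_union]
    constructor
    · intro h; rcases lt_or_eq_of_le h with h | h; exacts [Or.inl h, Or.inr h]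
    · rintro (h | h); exacts [le_of_lt h, le_of_eq h]
  have hdisj : Disjoint (univ.filter fun a : Fin n => x a < v)
      (univ.filter fun a : Fin n => x a = v) := by
    rw [Finset.disjoint_left]
    intro a ha hb
    simp only [mem_filter, mem_univ, true_and] at ha hb
    exact absurd hb (ne_of_lt ha)
  have := Finset.card_union_of_disjoint hdisj
  rw [← hsplit] at this
  unfold cLE cLT
  omega

lemma kmProd_eq (x d : Fin n → ℝ) (hd : ∀ a, d a = 0 ∨ d a = 1)
    (H : ∀ a b, x a = x b → d a = d b) (t : ℝ) :
    kmProd x d t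
      = ∏ v ∈ (univ.image x).filter (· ≤ t), (1 - DD x d v / (YY x v : ℝ)) := by
  unfold kmProd
  rw [← Finset.prod_fiberwise_of_maps_to (g := fun i : Fin n => x (Tuple.sort x i))
      (t := (univ.image x).filter (· ≤ t))
      (fun i hi => by
        simp only [mem_filter, mem_univ, true_and] at hi ⊢
        exact ⟨Finset.mem_image_of_mem x (mem_univ _), hi⟩)
      (fun i => 1 - d (Tuple.sort x i) / ((n : ℝ) - (i.1 : ℝ)))]
  apply Finset.prod_congr rfl
  intro v hv
  simp only [mem_filter] at hv
  obtain ⟨hvim, hvt⟩ := hv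
  obtain ⟨a₀, _, ha₀⟩ := Finset.mem_image.mp hvim
  have hfib : (univ.filter (fun i : Fin n => x (Tuple.sort x i) ≤ t)).filter
      (fun i => x (Tuple.sort x i) = v)
      = univ.filter (fun i : Fin n => cLT x v ≤ (i:ℕ) ∧ (i:ℕ) < cLE x v) := by
    ext i
    simp only [mem_filter, mem_univ, true_and]
    constructor
    · rintro ⟨_, h⟩; exact (sorted_eq_iff x v i).mp h
    · intro h
      have hxe := (sorted_eq_iff x v i).mpr h
      exact ⟨hxe.le.trans hvt, hxe⟩
  have hda : ∀ i : Fin n, x (Tuple.sort x i) = v → d (Tuple.sort x i) = d a₀ :=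
    fun i h => H _ _ (h.trans ha₀.symm)
  rcases hd a₀ with h0 | h1
  · have hL : ∀ i ∈ (univ.filter (fun i : Fin n => x (Tuple.sort x i) ≤ t)).filter
        (fun i => x (Tuple.sort x i) = v),
        (1 - d (Tuple.sort x i) / ((n : ℝ) - (i.1 : ℝ))) = 1 := by
      intro i hi
      simp only [mem_filter] at hi
      rw [hda i hi.2, h0]
      simp
    rw [Finset.prod_congr rfl hL, Finset.prod_const_one]
    have hDD : DD x d v = 0 := by
      apply Finset.sum_eq_zero
      intro a ha
      simp only [mem_filter, mem_univ, true_and] at ha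
      rw [H a a₀ (ha.trans ha₀.symm), h0]
    rw [hDD]
    simp
  · rw [hfib]
    have hL : ∀ i ∈ univ.filter (fun i : Fin n => cLT x v ≤ (i:ℕ) ∧ (i:ℕ) < cLE x v),
        (1 - d (Tuple.sort x i) / ((n : ℝ) - (i.1 : ℝ)))
          = 1 - 1 / ((n : ℝ) - (i.1 : ℝ)) := by
      intro i hi
      simp only [mem_filter, mem_univ, true_and] at hi
      rw [hda i ((sorted_eq_iff x v i).mpr hi), h1]
    rw [Finset.prod_congr rfl hL,
      prod_fin_interval (cLT x v) (cLE x v) (cLE_le x v) (fun s => 1 - 1 / ((n:ℝ) - s)),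
      telescope n (cLE x v) (cLT x v) (cLT_lt_cLE ha₀) (cLE_le x v)]
    have hDD : DD x d v = ((cLE x v - cLT x v : ℕ) : ℝ) := by
      unfold DD
      rw [← card_eq_fiber x v]
      rw [Finset.sum_congr rfl (fun a ha => by
        simp only [mem_filter, mem_univ, true_and] at ha
        rw [H a a₀ (ha.trans ha₀.symm), h1])]
      simp
    rw [hDD, YY_eq x v]
    have h1n : cLT x v < cLE x v := cLT_lt_cLE ha₀
    have h2n : cLE x v ≤ n := cLE_le x v
    have hcast1 : ((cLE x v - cLT x v : ℕ) : ℝ) = (cLE x v : ℝ) - (cLT x v : ℝ) := by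
      rw [Nat.cast_sub (le_of_lt h1n)]
    have hcast2 : ((n - cLT x v : ℕ) : ℝ) = (n : ℝ) - (cLT x v : ℝ) := by
      rw [Nat.cast_sub (by omega)]
    rw [hcast1, hcast2]
    have hne : (n : ℝ) - (cLT x v : ℝ) ≠ 0 := by
      have : cLT x v < n := by omega
      have : (cLT x v : ℝ) < (n : ℝ) := by exact_mod_cast this
      linarith
    field_simp
    ring

def DVals (x d : Fin n → ℝ) : Finset ℝ := (univ.filter fun b => d b = 1).image x
def DNum (x d : Fin n → ℝ) : ℕ := (DVals x d).card
def uu (x d : Fin n → ℝ) (l : Fin (DNum x d)) : ℝ :=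
  ((DVals x d).orderIsoOfFin rfl l : ℝ)

lemma uu_strictMono (x d : Fin n → ℝ) : StrictMono (uu x d) := by
  intro a b hab
  exact Subtype.coe_lt_coe.mpr (((DVals x d).orderIsoOfFin rfl).strictMono hab)

lemma uu_mono (x d : Fin n → ℝ) : Monotone (uu x d) := (uu_strictMono x d).monotone

lemma uu_mem (x d : Fin n → ℝ) (l : Fin (DNum x d)) : uu x d l ∈ DVals x d :=
  ((DVals x d).orderIsoOfFin rfl l).2

lemma uu_surj (x d : Fin n → ℝ) {v : ℝ} (hv : v ∈ DVals x d) :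
    ∃ l, uu x d l = v := by
  obtain ⟨l, hl⟩ := ((DVals x d).orderIsoOfFin rfl).surjective ⟨v, hv⟩
  exact ⟨l, by unfold uu; rw [hl]⟩

lemma exists_bl (x d : Fin n → ℝ) (l : Fin (DNum x d)) :
    ∃ b, d b = 1 ∧ x b = uu x d l := by
  have := uu_mem x d l
  rw [DVals, Finset.mem_image] at this
  obtain ⟨b, hb, hxb⟩ := this
  simp only [mem_filter, mem_univ, true_and] at hb
  exact ⟨b, hb, hxb⟩

def bl (x d : Fin n → ℝ) (l : Fin (DNum x d)) : Fin n := (exists_bl x d l).choose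

lemma bl_death (x d : Fin n → ℝ) (l : Fin (DNum x d)) : d (bl x d l) = 1 :=
  (exists_bl x d l).choose_spec.1

lemma bl_val (x d : Fin n → ℝ) (l : Fin (DNum x d)) : x (bl x d l) = uu x d l :=
  (exists_bl x d l).choose_spec.2

def Kb (j : Fin n → Fin n) (b : Fin n) : ℕ := (univ.filter fun a => j a = b).card
def Yb (x : Fin n → ℝ) (j : Fin n → Fin n) (v : ℝ) : ℕ :=
  (univ.filter fun a => v ≤ x (j a)).card

section identities
variable (x d : Fin n → ℝ) (hd : ∀ a, d a = 0 ∨ d a = 1)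
  (hx : ∀ a b, d a = 1 → x a = x b → a = b)

include hd in
lemma DD_nondeath (j : Fin n → Fin n) {v : ℝ} (hv : v ∉ DVals x d) :
    DD (fun i => x (j i)) (fun i => d (j i)) v = 0 := by
  apply Finset.sum_eq_zero
  intro a ha
  simp only [mem_filter, mem_univ, true_and] at ha
  rcases hd (j a) with h | h
  · exact h
  · exact absurd (by rw [DVals, Finset.mem_image]; exact ⟨j a, by simp [h], ha⟩) hv

include hd in
lemma DD_nondeath_self {v : ℝ} (hv : v ∉ DVals x d) : DD x d v = 0 :=
  DD_nondeath x d hd id hv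

include hd hx in
lemma DD_death_boot (j : Fin n → Fin n) (l : Fin (DNum x d)) :
    DD (fun i => x (j i)) (fun i => d (j i)) (uu x d l) = (Kb j (bl x d l) : ℝ) := by
  unfold DD Kb
  have hset : univ.filter (fun a : Fin n => j a = bl x d l)
      = (univ.filter fun a : Fin n => x (j a) = uu x d l).filter (fun a => d (j a) = 1) := by
    ext a
    simp only [mem_filter, mem_univ, true_and]
    constructor
    · intro h; rw [h]; exact ⟨bl_val x d l, bl_death x d l⟩
    · rintro ⟨h1, h2⟩
      exact hx (j a) (bl x d l) h2 (by rw [h1, bl_val x d l])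
  rw [hset]
  rw [Finset.card_filter]
  push_cast
  apply Finset.sum_congr rfl
  intro a ha
  rcases hd (j a) with h | h <;> simp [h]

include hd hx in
lemma DD_death_self (l : Fin (DNum x d)) : DD x d (uu x d l) = 1 := by
  have h := DD_death_boot x d hd hx id l
  rw [show DD x d (uu x d l) = DD (fun i => x (id i)) (fun i => d (id i)) (uu x d l) from rfl,
    h]
  have : Kb id (bl x d l) = 1 := by
    unfold Kb
    rw [show (univ.filter fun a : Fin n => id a = bl x d l) = {bl x d l} by ext a; simp]
    simp
  rw [this]; simp

lemma YY_death_pos (l : Fin (DNum x d)) : 1 ≤ YY x (uu x d l) := by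
  rw [YY]
  have : bl x d l ∈ univ.filter fun a : Fin n => uu x d l ≤ x a := by
    simp [(bl_val x d l).ge]
  exact Finset.card_pos.mpr ⟨_, this⟩

lemma Yb_antitone (j : Fin n → Fin n) : Antitone (Yb x j) := by
  intro v w hvw
  apply Finset.card_le_card
  intro a ha
  simp only [mem_filter, mem_univ, true_and] at ha ⊢
  exact le_trans hvw ha

lemma YY_antitone : Antitone (YY x) := by
  intro v w hvw
  apply Finset.card_le_card
  intro a ha
  simp only [mem_filter, mem_univ, true_and] at ha ⊢
  exact le_trans hvw ha

lemma Kb_le_Yb (j : Fin n → Fin n) (l : Fin (DNum x d)) :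
    Kb j (bl x d l) ≤ Yb x j (uu x d l) := by
  apply Finset.card_le_card
  intro a ha
  simp only [mem_filter, mem_univ, true_and] at ha ⊢
  rw [ha, bl_val x d l]

end identities

def FF (x d : Fin n → ℝ) (j : Fin n → Fin n) (k : ℕ) : ℝ :=
  if h : k < DNum x d then
    (if Yb x j (uu x d ⟨k, h⟩) = 0 ∨ YY x (uu x d ⟨k, h⟩) ≤ 1 then 1
     else (1 - (Kb j (bl x d ⟨k, h⟩) : ℝ) / (Yb x j (uu x d ⟨k, h⟩) : ℝ))
        / (1 - 1 / (YY x (uu x d ⟨k, h⟩) : ℝ)))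
  else 1

def MM (x d : Fin n → ℝ) (β : ℝ) : ℕ → (Fin n → Fin n) → ℝ
  | 0, _ => 1
  | k+1, j => if β⁻¹ < MM x d β k j then MM x d β k j else MM x d β k j * FF x d j k

lemma FF_nonneg (x d : Fin n → ℝ) (j : Fin n → Fin n) (k : ℕ) : 0 ≤ FF x d j k := by
  unfold FF
  split
  · rename_i h
    split
    · exact zero_le_one
    · rename_i hcond
      push_neg at hcond
      obtain ⟨hY0, hr⟩ := hcond
      have hY1 : 1 ≤ Yb x j (uu x d ⟨k, h⟩) := Nat.one_le_iff_ne_zero.mpr hY0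
      have hr2 : 2 ≤ YY x (uu x d ⟨k, h⟩) := by omega
      apply div_nonneg
      · have hKY := Kb_le_Yb x d j ⟨k, h⟩
        have h1 : (Kb j (bl x d ⟨k, h⟩) : ℝ) ≤ (Yb x j (uu x d ⟨k, h⟩) : ℝ) := by
          exact_mod_cast hKY
        have h2 : (0 : ℝ) < (Yb x j (uu x d ⟨k, h⟩) : ℝ) := by exact_mod_cast hY1
        have := div_le_one_of_le₀ h1 h2.le
        linarith
      · have h2 : (2 : ℝ) ≤ (YY x (uu x d ⟨k, h⟩) : ℝ) := by exact_mod_cast hr2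
        have : 1 / (YY x (uu x d ⟨k, h⟩) : ℝ) ≤ 1 / 2 := by
          apply one_div_le_one_div_of_le <;> linarith
        linarith
  · exact zero_le_one

lemma MM_nonneg (x d : Fin n → ℝ) (β : ℝ) (k : ℕ) (j : Fin n → Fin n) :
    0 ≤ MM x d β k j := by
  induction k with
  | zero => rw [MM]; exact zero_le_one
  | succ k ih =>
    rw [MM]
    split
    · exact ih
    · exact mul_nonneg ih (FF_nonneg x d j k)

lemma MM_frozen (x d : Fin n → ℝ) (β : ℝ) {m : ℕ} (j : Fin n → Fin n)
    (h : β⁻¹ < MM x d β m j) : ∀ m', m ≤ m' → β⁻¹ < MM x d β m' j := by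
  intro m' hm'
  induction m' with
  | zero => exact Nat.le_zero.mp hm' ▸ h
  | succ m' ih =>
    rcases Nat.lt_or_ge m (m' + 1) with hlt | hge
    · have hm'' := ih (by omega)
      rw [MM, if_pos hm'']
      exact hm''
    · have : m = m' + 1 := by omega
      exact this ▸ h

def lowmap (x : Fin n → ℝ) (v : ℝ) (j : Fin n → Fin n) : Fin n → Option (Fin n) :=
  fun a => if v ≤ x (j a) then none else some (j a)

lemma Kb_of_lowmap (x : Fin n → ℝ) (v : ℝ) (j : Fin n → Fin n) (b : Fin n)
    (hb : x b < v) :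
    Kb j b = (univ.filter fun a => lowmap x v j a = some b).card := by
  unfold Kb
  congr 1
  apply Finset.filter_congr
  intro a _
  unfold lowmap
  constructor
  · intro h
    subst h
    rw [if_neg (not_le.mpr hb)]
  · intro h
    by_cases hv : v ≤ x (j a)
    · rw [if_pos hv] at h; exact absurd h (by simp)
    · rw [if_neg hv] at h; exact Option.some_injective _ h

lemma Yb_of_lowmap (x : Fin n → ℝ) (v w : ℝ) (j : Fin n → Fin n) (hwv : w ≤ v) :
    Yb x j w = (univ.filter fun a =>
      (lowmap x v j a).elim True (fun b => w ≤ x b)).card := by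
  unfold Yb
  congr 1
  apply Finset.filter_congr
  intro a _
  unfold lowmap
  by_cases hv : v ≤ x (j a)
  · rw [if_pos hv]
    simp only [Option.elim]
    exact iff_of_true (le_trans hwv hv) trivial
  · rw [if_neg hv]
    simp only [Option.elim]

lemma Yb_at_v (x : Fin n → ℝ) (v : ℝ) (j : Fin n → Fin n) :
    Yb x j v = (univ.filter fun a => lowmap x v j a = none).card := by
  unfold Yb
  congr 1
  apply Finset.filter_congr
  intro a _
  unfold lowmap
  by_cases hv : v ≤ x (j a)
  · rw [if_pos hv]; exact iff_of_true hv rfl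
  · rw [if_neg hv]; exact iff_of_false hv (by simp)

lemma FF_congr (x d : Fin n → ℝ) {k m : ℕ} (hk : k < DNum x d) (hm : m < k)
    {j j' : Fin n → Fin n}
    (h : lowmap x (uu x d ⟨k, hk⟩) j = lowmap x (uu x d ⟨k, hk⟩) j') :
    FF x d j m = FF x d j' m := by
  have hmD : m < DNum x d := hm.trans hk
  have hlt : uu x d ⟨m, hmD⟩ < uu x d ⟨k, hk⟩ := uu_strictMono x d (by simp [Fin.lt_def, hm])
  have hKb : Kb j (bl x d ⟨m, hmD⟩) = Kb j' (bl x d ⟨m, hmD⟩) := by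
    rw [Kb_of_lowmap x (uu x d ⟨k, hk⟩) j _ (by rw [bl_val x d ⟨m, hmD⟩]; exact hlt),
        Kb_of_lowmap x (uu x d ⟨k, hk⟩) j' _ (by rw [bl_val x d ⟨m, hmD⟩]; exact hlt), h]
  have hYb : Yb x j (uu x d ⟨m, hmD⟩) = Yb x j' (uu x d ⟨m, hmD⟩) := by
    rw [Yb_of_lowmap x (uu x d ⟨k, hk⟩) _ j hlt.le,
        Yb_of_lowmap x (uu x d ⟨k, hk⟩) _ j' hlt.le, h]
  unfold FF
  rw [dif_pos hmD, dif_pos hmD, hKb, hYb]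

lemma MM_congr (x d : Fin n → ℝ) (β : ℝ) {k : ℕ} (hk : k < DNum x d)
    {j j' : Fin n → Fin n}
    (h : lowmap x (uu x d ⟨k, hk⟩) j = lowmap x (uu x d ⟨k, hk⟩) j') :
    ∀ m, m ≤ k → MM x d β m j = MM x d β m j' := by
  intro m
  induction m with
  | zero => intro _; rfl
  | succ m ih =>
    intro hmk
    have h1 := ih (by omega)
    rw [MM, MM, h1, FF_congr x d hk (by omega) h]

lemma fiber_eq_piFinset (x : Fin n → ℝ) (v : ℝ) (j₀ : Fin n → Fin n) :
    univ.filter (fun j : Fin n → Fin n => lowmap x v j = lowmap x v j₀)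
      = Fintype.piFinset (fun a => (lowmap x v j₀ a).elim
          (univ.filter fun b => v ≤ x b) (fun w => {w})) := by
  ext j
  simp only [mem_filter, mem_univ, true_and, Fintype.mem_piFinset]
  constructor
  · intro h a
    have ha := congrFun h a
    unfold lowmap at ha ⊢
    by_cases hv : v ≤ x (j a)
    · rw [if_pos hv] at ha
      rw [← ha]
      simp only [Option.elim]
      simp [hv]
    · rw [if_neg hv] at ha
      rw [← ha]
      simp only [Option.elim]
      simp
  · intro h
    funext a
    have ha := h a
    unfold lowmap at ha ⊢
    by_cases hv0 : v ≤ x (j₀ a)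
    · rw [if_pos hv0] at ha ⊢
      simp only [Option.elim, mem_filter, mem_univ, true_and] at ha
      rw [if_pos ha]
    · rw [if_neg hv0] at ha ⊢
      simp only [Option.elim, Finset.mem_singleton] at ha
      rw [ha, if_neg hv0]

lemma fiber_filter_coord (x : Fin n → ℝ) (v : ℝ) (j₀ : Fin n → Fin n)
    (a : Fin n) (b : Fin n) (hb : b ∈ univ.filter fun b' => v ≤ x b')
    (ha : lowmap x v j₀ a = none) :
    ((univ.filter (fun j : Fin n → Fin n => lowmap x v j = lowmap x v j₀)).filter
        (fun j => j a = b)).card * (univ.filter fun b' => v ≤ x b').card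
      = (univ.filter (fun j : Fin n → Fin n => lowmap x v j = lowmap x v j₀)).card := by
  classical
  set t := fun a' => (lowmap x v j₀ a').elim (univ.filter fun b' => v ≤ x b') (fun w => {w})
    with ht
  have hta : t a = univ.filter fun b' => v ≤ x b' := by rw [ht]; simp only [ha, Option.elim]
  have h1 : (univ.filter (fun j : Fin n → Fin n => lowmap x v j = lowmap x v j₀)).filter
      (fun j => j a = b) = Fintype.piFinset (Function.update t a {b}) := by
    rw [fiber_eq_piFinset]
    ext j
    simp only [mem_filter, Fintype.mem_piFinset]
    constructor
    · rintro ⟨h1, h2⟩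
      intro a'
      by_cases haa : a' = a
      · subst haa; rw [Function.update_self]; simp [h2]
      · rw [Function.update_of_ne haa]; exact h1 a'
    · intro h
      constructor
      · intro a'
        by_cases haa : a' = a
        · subst haa
          have := h a'
          rw [Function.update_self, Finset.mem_singleton] at this
          rw [this]
          show b ∈ t a'
          rw [hta]
          exact hb
        · have := h a'
          rwa [Function.update_of_ne haa] at this
      · have := h a
        rwa [Function.update_self, Finset.mem_singleton] at this
  rw [h1, fiber_eq_piFinset, Fintype.card_piFinset, Fintype.card_piFinset]
  show (∏ i : Fin n, (Function.update t a {b} i).card) * (univ.filter fun b' => v ≤ x b').card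
      = ∏ i : Fin n, (t i).card
  rw [← Finset.mul_prod_erase univ _ (mem_univ a), ← Finset.mul_prod_erase univ
    (fun a' => (t a').card) (mem_univ a)]
  rw [Function.update_self, Finset.card_singleton, one_mul, hta]
  rw [Finset.prod_congr rfl (fun a' ha' => by
    rw [Function.update_of_ne (Finset.mem_erase.mp ha').1])]
  ring

lemma Kb_sum_fiber (x : Fin n → ℝ) (v : ℝ) (j₀ : Fin n → Fin n) (b : Fin n)
    (hxb : x b = v) :
    (∑ j ∈ univ.filter (fun j : Fin n → Fin n => lowmap x v j = lowmap x v j₀), Kb j b)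
        * (univ.filter fun b' => v ≤ x b').card
      = (univ.filter fun a => lowmap x v j₀ a = none).card
        * (univ.filter (fun j : Fin n → Fin n => lowmap x v j = lowmap x v j₀)).card := by
  classical
  set fib := univ.filter (fun j : Fin n → Fin n => lowmap x v j = lowmap x v j₀) with hfib
  have hKb : ∀ j : Fin n → Fin n, Kb j b = ∑ a : Fin n, if j a = b then 1 else 0 := by
    intro j; rw [Kb, Finset.card_filter]
  rw [Finset.sum_congr rfl (fun j _ => hKb j), Finset.sum_comm, Finset.sum_mul]
  have hterm : ∀ a : Fin n, (∑ j ∈ fib, if j a = b then 1 else 0)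
      * (univ.filter fun b' => v ≤ x b').card
      = if lowmap x v j₀ a = none then fib.card else 0 := by
    intro a
    have hcf : (∑ j ∈ fib, if j a = b then 1 else 0) = (fib.filter (fun j => j a = b)).card := by
      rw [Finset.card_filter]
    rw [hcf]
    by_cases ha : lowmap x v j₀ a = none
    · rw [if_pos ha]
      exact fiber_filter_coord x v j₀ a b (by simp [hxb.ge]) ha
    · rw [if_neg ha]
      have hempty : fib.filter (fun j => j a = b) = ∅ := by
        rw [Finset.eq_empty_iff_forall_notMem]
        intro j hj
        simp only [hfib, mem_filter, mem_univ, true_and] at hj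
        obtain ⟨⟨hj1, hj2⟩⟩ := And.intro hj trivial
        have := congrFun hj1 a
        unfold lowmap at this ha
        by_cases hv : v ≤ x (j a)
        · rw [if_pos hv] at this; exact ha this.symm
        · rw [if_neg hv] at this
          rw [hj2] at hv
          exact hv (le_of_eq hxb.symm)
      rw [hempty]
      simp
  rw [Finset.sum_congr rfl (fun a _ => hterm a), ← Finset.sum_filter,
    Finset.sum_const, smul_eq_mul]

lemma FF_fiber_sum (x d : Fin n → ℝ) {k : ℕ} (hk : k < DNum x d) (j₀ : Fin n → Fin n) :
    ∑ j ∈ univ.filter (fun j : Fin n → Fin n =>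
        lowmap x (uu x d ⟨k, hk⟩) j = lowmap x (uu x d ⟨k, hk⟩) j₀), FF x d j k
      = ((univ.filter (fun j : Fin n → Fin n =>
          lowmap x (uu x d ⟨k, hk⟩) j = lowmap x (uu x d ⟨k, hk⟩) j₀)).card : ℝ) := by
  classical
  set v := uu x d ⟨k, hk⟩ with hv
  set fib := univ.filter (fun j : Fin n → Fin n => lowmap x v j = lowmap x v j₀) with hfib
  set yA := (univ.filter fun a => lowmap x v j₀ a = none).card with hyA
  have hYbfib : ∀ j ∈ fib, Yb x j v = yA := by
    intro j hj
    rw [hfib, mem_filter] at hj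
    rw [Yb_at_v, hj.2]
  set r := YY x v with hr
  by_cases hdeg : yA = 0 ∨ r ≤ 1
  · have hone : ∀ j ∈ fib, FF x d j k = 1 := by
      intro j hj
      unfold FF
      rw [dif_pos hk, if_pos]
      rw [← hv, ← hr, hYbfib j hj]
      exact hdeg
    rw [Finset.sum_congr rfl hone, Finset.sum_const, nsmul_eq_mul, mul_one]
  · push_neg at hdeg
    obtain ⟨hyA0, hr1⟩ := hdeg
    have hr2 : 2 ≤ r := by omega
    set b := bl x d ⟨k, hk⟩ with hb
    have hFFval : ∀ j ∈ fib, FF x d j k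
        = (1 - (Kb j b : ℝ) / (yA : ℝ)) / (1 - 1 / (r : ℝ)) := by
      intro j hj
      unfold FF
      rw [dif_pos hk, if_neg]
      · rw [← hv, ← hr, ← hb, hYbfib j hj]
      · rw [← hv, ← hr, hYbfib j hj]
        push_neg
        exact ⟨hyA0, by omega⟩
    rw [Finset.sum_congr rfl hFFval]
    have hKs := Kb_sum_fiber x v j₀ b (by rw [hb, bl_val x d ⟨k, hk⟩, hv])
    rw [← hfib, ← hyA] at hKs
    have hBr : (univ.filter fun b' => v ≤ x b').card = r := by rw [hr]; rfl
    rw [hBr] at hKs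
    have hKr : (∑ j ∈ fib, (Kb j b : ℝ)) * (r : ℝ) = (yA : ℝ) * (fib.card : ℝ) := by
      exact_mod_cast hKs
    have hyAne : (yA : ℝ) ≠ 0 := Nat.cast_ne_zero.mpr hyA0
    have hrne : (r : ℝ) ≠ 0 := Nat.cast_ne_zero.mpr (by omega)
    have hr1' : (1 : ℝ) < (r : ℝ) := by exact_mod_cast hr1
    have h1r : (1 : ℝ) - 1 / (r : ℝ) ≠ 0 := by
      have : 1 / (r : ℝ) < 1 := by
        rw [div_lt_one (by linarith)]
        exact hr1'
      linarith
    rw [← Finset.sum_div, Finset.sum_sub_distrib, Finset.sum_const, ← Finset.sum_div,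
      nsmul_eq_mul, mul_one]
    rw [div_eq_iff h1r]
    have hKeq : (∑ j ∈ fib, (Kb j b : ℝ)) = (yA : ℝ) * (fib.card : ℝ) / (r : ℝ) := by
      field_simp at hKr ⊢
      linarith
    rw [hKeq]
    field_simp

lemma MM_sum (x d : Fin n → ℝ) (β : ℝ) (k : ℕ) :
    ∑ j : Fin n → Fin n, MM x d β k j = (Fintype.card (Fin n → Fin n) : ℝ) := by
  classical
  induction k with
  | zero =>
    simp only [MM]
    rw [Finset.sum_const, nsmul_eq_mul, mul_one, Finset.card_univ]
  | succ k ih =>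
    by_cases hk : k < DNum x d
    · have key : ∑ j : Fin n → Fin n, MM x d β (k+1) j
          = ∑ j : Fin n → Fin n, MM x d β k j := by
        set v := uu x d ⟨k, hk⟩ with hv
        set L := lowmap x v with hL
        have hmaps : ∀ j : Fin n → Fin n, j ∈ (univ : Finset (Fin n → Fin n))
            → L j ∈ univ.image L := fun j _ => Finset.mem_image_of_mem L (mem_univ j)
        rw [← Finset.sum_fiberwise_of_maps_to hmaps (MM x d β (k+1)),
            ← Finset.sum_fiberwise_of_maps_to hmaps (MM x d β k)]
        apply Finset.sum_congr rfl
        intro ℓ hℓ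
        obtain ⟨j₀, _, hj₀⟩ := Finset.mem_image.mp hℓ
        have hfibeq : univ.filter (fun j : Fin n → Fin n => L j = ℓ)
            = univ.filter (fun j : Fin n → Fin n => L j = L j₀) := by
          rw [hj₀]
        rw [hfibeq]
        have hconst : ∀ j ∈ univ.filter (fun j : Fin n → Fin n => L j = L j₀),
            MM x d β k j = MM x d β k j₀ := by
          intro j hj
          rw [mem_filter] at hj
          exact MM_congr x d β hk hj.2 k le_rfl
        by_cases hfreeze : β⁻¹ < MM x d β k j₀
        · apply Finset.sum_congr rfl
          intro j hj
          rw [MM, if_pos (by rw [hconst j hj]; exact hfreeze)]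
        · have hstep : ∀ j ∈ univ.filter (fun j : Fin n → Fin n => L j = L j₀),
              MM x d β (k+1) j = MM x d β k j₀ * FF x d j k := by
            intro j hj
            rw [MM, hconst j hj, if_neg hfreeze]
          rw [Finset.sum_congr rfl hstep, Finset.sum_congr rfl hconst,
            ← Finset.mul_sum, FF_fiber_sum x d hk j₀, Finset.sum_const,
            nsmul_eq_mul, mul_comm]
      rw [key, ih]
    · have hFF1 : ∀ j : Fin n → Fin n, FF x d j k = 1 := by
        intro j; unfold FF; rw [dif_neg hk]
      have : ∀ j : Fin n → Fin n, MM x d β (k+1) j = MM x d β k j := by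
        intro j
        rw [MM, hFF1, mul_one, ite_self]
      rw [Finset.sum_congr rfl (fun j _ => this j)]
      exact ih

def numf (x d : Fin n → ℝ) (j : Fin n → Fin n) (l : ℕ) : ℝ :=
  if h : l < DNum x d then
    (1 - (Kb j (bl x d ⟨l, h⟩) : ℝ) / (Yb x j (uu x d ⟨l, h⟩) : ℝ)) else 1

def denf (x d : Fin n → ℝ) (l : ℕ) : ℝ :=
  if h : l < DNum x d then (1 - 1 / (YY x (uu x d ⟨l, h⟩) : ℝ)) else 1

lemma denf_nonneg (x d : Fin n → ℝ) (l : ℕ) : 0 ≤ denf x d l := by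
  unfold denf
  split
  · rename_i h
    have h1 : 1 ≤ YY x (uu x d ⟨l, h⟩) := YY_death_pos x d ⟨l, h⟩
    have h1' : (1 : ℝ) ≤ (YY x (uu x d ⟨l, h⟩) : ℝ) := by exact_mod_cast h1
    have : 1 / (YY x (uu x d ⟨l, h⟩) : ℝ) ≤ 1 := by
      rw [div_le_one (by linarith)]; linarith
    linarith
  · exact zero_le_one

lemma denf_pos (x d : Fin n → ℝ) {l : ℕ} (h : l < DNum x d)
    (h2 : 2 ≤ YY x (uu x d ⟨l, h⟩)) : 0 < denf x d l := by
  unfold denf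
  rw [dif_pos h]
  have h2' : (2 : ℝ) ≤ (YY x (uu x d ⟨l, h⟩) : ℝ) := by exact_mod_cast h2
  have : 1 / (YY x (uu x d ⟨l, h⟩) : ℝ) ≤ 1 / 2 := by
    apply one_div_le_one_div_of_le <;> linarith
  linarith

lemma MM_of_bad (x d : Fin n → ℝ) (β : ℝ) (hβ0 : 0 < β) (j : Fin n → Fin n)
    {k : ℕ} (hk : k < DNum x d) (hY : 1 ≤ Yb x j (uu x d ⟨k, hk⟩))
    (hbad : β⁻¹ * ∏ l ∈ Finset.range (k+1), denf x d l
      < ∏ l ∈ Finset.range (k+1), numf x d j l) :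
    β⁻¹ < MM x d β (DNum x d) j := by
  by_contra hno
  push_neg at hno
  have hfrozen : ∀ m, m ≤ DNum x d → ¬ β⁻¹ < MM x d β m j := by
    intro m hm h
    exact absurd (MM_frozen x d β j h (DNum x d) hm) (not_lt.mpr hno)
  have hMMprod : ∀ m, m ≤ DNum x d → MM x d β m j = ∏ l ∈ Finset.range m, FF x d j l := by
    intro m
    induction m with
    | zero => intro _; simp [MM]
    | succ m ih =>
      intro hm
      rw [MM, if_neg (hfrozen m (by omega)), ih (by omega), Finset.prod_range_succ]
  by_cases hr : YY x (uu x d ⟨k, hk⟩) ≤ 1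
  · -- at-risk set is the single death point; numerator factor vanishes
    have hbk : bl x d ⟨k, hk⟩ ∈ univ.filter (fun b => uu x d ⟨k, hk⟩ ≤ x b) := by
      simp [(bl_val x d ⟨k, hk⟩).ge]
    have hsing : univ.filter (fun b => uu x d ⟨k, hk⟩ ≤ x b) = {bl x d ⟨k, hk⟩} := by
      apply Finset.eq_singleton_iff_unique_mem.mpr
      refine ⟨hbk, fun y hy => ?_⟩
      exact Finset.card_le_one.mp hr y hy _ hbk
    have hYbKb : Yb x j (uu x d ⟨k, hk⟩) = Kb j (bl x d ⟨k, hk⟩) := by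
      unfold Yb Kb
      congr 1
      apply Finset.filter_congr
      intro a _
      constructor
      · intro h
        have : j a ∈ univ.filter (fun b => uu x d ⟨k, hk⟩ ≤ x b) := by simp [h]
        rw [hsing, Finset.mem_singleton] at this
        exact this
      · intro h
        rw [h, bl_val x d ⟨k, hk⟩]
    have hnum0 : numf x d j k = 0 := by
      unfold numf
      rw [dif_pos hk, hYbKb]
      have hne : (Kb j (bl x d ⟨k, hk⟩) : ℝ) ≠ 0 := by
        rw [← hYbKb]
        exact Nat.cast_ne_zero.mpr (by omega)
      rw [div_self hne]
      ring
    have hprod0 : ∏ l ∈ Finset.range (k+1), numf x d j l = 0 :=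
      Finset.prod_eq_zero (Finset.self_mem_range_succ k) hnum0
    rw [hprod0] at hbad
    have hden : 0 ≤ ∏ l ∈ Finset.range (k+1), denf x d l :=
      Finset.prod_nonneg (fun l _ => denf_nonneg x d l)
    have : 0 < β⁻¹ := inv_pos.mpr hβ0
    nlinarith
  · push_neg at hr
    have hr2 : 2 ≤ YY x (uu x d ⟨k, hk⟩) := hr
    have hfacts : ∀ l, (hl : l < k + 1) →
        2 ≤ YY x (uu x d ⟨l, by omega⟩) ∧ 1 ≤ Yb x j (uu x d ⟨l, by omega⟩) := by
      intro l hl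
      have hlD : l < DNum x d := by omega
      have hle : uu x d ⟨l, hlD⟩ ≤ uu x d ⟨k, hk⟩ :=
        (uu_strictMono x d).monotone (by simp [Fin.mk_le_mk]; omega)
      constructor
      · exact le_trans hr2 (YY_antitone x hle)
      · exact le_trans hY (Yb_antitone x j hle)
    have hFF : ∀ l ∈ Finset.range (k+1), FF x d j l = numf x d j l / denf x d l := by
      intro l hl
      rw [Finset.mem_range] at hl
      have hlD : l < DNum x d := by omega
      obtain ⟨h2, h1⟩ := hfacts l hl
      unfold FF numf denf
      rw [dif_pos hlD, dif_pos hlD, dif_pos hlD, if_neg]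
      push_neg
      exact ⟨by omega, by omega⟩
    have hMMk : MM x d β (k+1) j
        = (∏ l ∈ Finset.range (k+1), numf x d j l)
          / (∏ l ∈ Finset.range (k+1), denf x d l) := by
      rw [hMMprod (k+1) (by omega), Finset.prod_congr rfl hFF, Finset.prod_div_distrib]
    have hdenpos : 0 < ∏ l ∈ Finset.range (k+1), denf x d l := by
      apply Finset.prod_pos
      intro l hl
      rw [Finset.mem_range] at hl
      exact denf_pos x d (by omega) (hfacts l hl).1
    have : β⁻¹ < MM x d β (k+1) j := by
      rw [hMMk, lt_div_iff₀ hdenpos]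
      linarith [hbad]
    exact hfrozen (k+1) (by omega) this

lemma sSup_range_attained {n : ℕ} (hn : 0 < n) (f : Fin n → ℝ) :
    ∃ a₀ : Fin n, sSup (Set.range f) = f a₀ ∧ ∀ a, f a ≤ f a₀ := by
  have hne : (univ : Finset (Fin n)).Nonempty := ⟨⟨0, hn⟩, mem_univ _⟩
  obtain ⟨a₀, _, hmax⟩ := Finset.exists_max_image univ f hne
  refine ⟨a₀, ?_, fun a => hmax a (mem_univ a)⟩
  apply IsGreatest.csSup_eq
  exact ⟨Set.mem_range_self a₀, by rintro y ⟨a, rfl⟩; exact hmax a (mem_univ a)⟩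

lemma not_good_imp_bad {n : ℕ} (hn : 0 < n) (x d : Fin n → ℝ)
    (hd : ∀ a, d a = 0 ∨ d a = 1) (hx : ∀ a b, d a = 1 → x a = x b → a = b)
    (β : ℝ) (hβ0 : 0 < β) (hβ1 : β < 1) (j : Fin n → Fin n)
    (hnotgood : ¬ ∀ t : ℝ, 0 ≤ t → t ≤ sSup (Set.range fun i => x (j i)) →
      kmProd (fun i => x (j i)) (fun i => d (j i)) t ≤ β⁻¹ * kmProd x d t) :
    β⁻¹ < MM x d β (DNum x d) j := by
  classical
  push_neg at hnotgood
  obtain ⟨t, ht0, htmax, hlt⟩ := hnotgood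
  have H1 : ∀ a b, x a = x b → d a = d b := by
    intro a b h
    rcases hd a with ha | ha
    · rcases hd b with hb | hb
      · rw [ha, hb]
      · rw [hx b a hb h.symm] at hb; rw [ha] at hb; exact absurd hb (by norm_num)
    · rw [hx a b ha h]
  have H2 : ∀ a b, x (j a) = x (j b) → d (j a) = d (j b) := fun a b h => H1 _ _ h
  rw [kmProd_eq x d hd H1 t,
      kmProd_eq (fun i => x (j i)) (fun i => d (j i)) (fun a => hd (j a)) H2 t] at hlt
  -- extend bootstrap product to image of x
  set W := (univ.image x).filter (· ≤ t) with hW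
  have hWj : (univ.image (fun i => x (j i))).filter (· ≤ t) ⊆ W := by
    apply Finset.filter_subset_filter
    intro v hv
    rw [Finset.mem_image] at hv ⊢
    obtain ⟨a, _, ha⟩ := hv
    exact ⟨j a, mem_univ _, ha⟩
  have hextend : ∏ v ∈ (univ.image (fun i => x (j i))).filter (· ≤ t),
        (1 - DD (fun i => x (j i)) (fun i => d (j i)) v
          / (YY (fun i => x (j i)) v : ℝ))
      = ∏ v ∈ W, (1 - DD (fun i => x (j i)) (fun i => d (j i)) v
          / (YY (fun i => x (j i)) v : ℝ)) := by
    apply Finset.prod_subset hWj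
    intro v hvW hvj
    have hDD0 : DD (fun i => x (j i)) (fun i => d (j i)) v = 0 := by
      apply Finset.sum_eq_zero
      intro a ha
      simp only [mem_filter, mem_univ, true_and] at ha
      exfalso
      apply hvj
      rw [hW, mem_filter] at hvW
      rw [mem_filter, Finset.mem_image]
      exact ⟨⟨a, mem_univ _, ha⟩, hvW.2⟩
    rw [hDD0]
    simp
  rw [hextend] at hlt
  -- restrict both products to death values
  have hrestrict : ∀ g : ℝ → ℕ, ∀ DDf : ℝ → ℝ,
      (∀ v, v ∉ DVals x d → DDf v = 0) →
      ∏ v ∈ W, (1 - DDf v / (g v : ℝ))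
        = ∏ v ∈ (DVals x d).filter (· ≤ t), (1 - DDf v / (g v : ℝ)) := by
    intro g DDf hDf
    have hsub : (DVals x d).filter (· ≤ t) ⊆ W := by
      apply Finset.filter_subset_filter
      intro v hv
      rw [DVals, Finset.mem_image] at hv
      obtain ⟨b, _, hb⟩ := hv
      rw [Finset.mem_image]
      exact ⟨b, mem_univ _, hb⟩
    rw [eq_comm]
    apply Finset.prod_subset hsub
    intro v hvW hvd
    have : v ∉ DVals x d := by
      intro hmem
      apply hvd
      rw [mem_filter]
      rw [hW, mem_filter] at hvW
      exact ⟨hmem, hvW.2⟩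
    rw [hDf v this]
    simp
  rw [hrestrict _ _ (fun v hv => DD_nondeath x d hd j hv),
      hrestrict _ _ (fun v hv => DD_nondeath_self x d hd hv)] at hlt
  -- reindex over initial segment of deaths
  set kk := (univ.filter (fun l : Fin (DNum x d) => uu x d l ≤ t)).card with hkk
  have hdc : ∀ l : Fin (DNum x d),
      l ∈ univ.filter (fun l : Fin (DNum x d) => uu x d l ≤ t) ↔ (l : ℕ) < kk := by
    intro l
    exact downclosed_mem_iff _ (fun i i' hii hi => by
      simp only [mem_filter, mem_univ, true_and] at hi ⊢
      exact le_trans ((uu_strictMono x d).monotone hii) hi) l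
  have hkkD : kk ≤ DNum x d := by
    rw [hkk]
    calc (univ.filter (fun l : Fin (DNum x d) => uu x d l ≤ t)).card
        ≤ (univ : Finset (Fin (DNum x d))).card := Finset.card_le_card (filter_subset _ _)
      _ = DNum x d := by simp
  have hreindex : ∀ f : ℝ → ℝ,
      ∏ v ∈ (DVals x d).filter (· ≤ t), f v
        = ∏ s ∈ Finset.range kk,
            (if hs : s < DNum x d then f (uu x d ⟨s, hs⟩) else 1) := by
    intro f
    have h1 : ∏ l ∈ univ.filter (fun l : Fin (DNum x d) => uu x d l ≤ t), f (uu x d l)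
        = ∏ v ∈ (DVals x d).filter (· ≤ t), f v := by
      apply Finset.prod_bij (fun l _ => uu x d l)
      · intro l hl
        simp only [mem_filter, mem_univ, true_and] at hl ⊢
        exact ⟨uu_mem x d l, hl⟩
      · intro l _ l' _ h
        exact (uu_strictMono x d).injective h
      · intro v hv
        simp only [mem_filter] at hv
        obtain ⟨l, hl⟩ := uu_surj x d hv.1
        exact ⟨l, by simp only [mem_filter, mem_univ, true_and]; rw [hl]; exact hv.2, hl⟩
      · intro l _; rfl
    rw [← h1]
    have h2 : univ.filter (fun l : Fin (DNum x d) => uu x d l ≤ t)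
        = univ.filter (fun l : Fin (DNum x d) => 0 ≤ (l : ℕ) ∧ (l : ℕ) < kk) := by
      ext l
      rw [hdc l, mem_filter]
      simp
    rw [h2]
    have h3 : ∀ l ∈ univ.filter (fun l : Fin (DNum x d) => 0 ≤ (l : ℕ) ∧ (l : ℕ) < kk),
        f (uu x d l) = (fun s : ℕ => if hs : s < DNum x d then f (uu x d ⟨s, hs⟩) else 1) (l : ℕ) := by
      intro l _
      simp only [dif_pos l.2]
    rw [Finset.prod_congr rfl h3,
      prod_fin_interval 0 kk hkkD (fun s : ℕ => if hs : s < DNum x d then f (uu x d ⟨s, hs⟩) else 1)]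
    rw [← Nat.Ico_zero_eq_range]
  rw [hreindex (fun v => 1 - DD x d v / (YY x v : ℝ)),
      hreindex (fun v => 1 - DD (fun i => x (j i)) (fun i => d (j i)) v
        / (YY (fun i => x (j i)) v : ℝ))] at hlt
  have hdeneq : ∀ s ∈ Finset.range kk,
      (if hs : s < DNum x d then
        (fun v => 1 - DD x d v / (YY x v : ℝ)) (uu x d ⟨s, hs⟩) else 1) = denf x d s := by
    intro s hs
    have hsD : s < DNum x d := lt_of_lt_of_le (Finset.mem_range.mp hs) hkkD
    rw [dif_pos hsD]
    beta_reduce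
    unfold denf
    rw [dif_pos hsD, DD_death_self x d hd hx ⟨s, hsD⟩]
  have hnumeq : ∀ s ∈ Finset.range kk,
      (if hs : s < DNum x d then
        (fun v => 1 - DD (fun i => x (j i)) (fun i => d (j i)) v
          / (YY (fun i => x (j i)) v : ℝ)) (uu x d ⟨s, hs⟩) else 1) = numf x d j s := by
    intro s hs
    have hsD : s < DNum x d := lt_of_lt_of_le (Finset.mem_range.mp hs) hkkD
    rw [dif_pos hsD]
    beta_reduce
    unfold numf
    rw [dif_pos hsD, DD_death_boot x d hd hx j ⟨s, hsD⟩]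
    rfl
  rw [Finset.prod_congr rfl hdeneq, Finset.prod_congr rfl hnumeq] at hlt
  -- the number of deaths up to t is positive
  have hkk1 : 1 ≤ kk := by
    by_contra hkk0
    push_neg at hkk0
    interval_cases kk
    · simp only [Finset.range_zero, Finset.prod_empty, mul_one] at hlt
      have : 1 < β⁻¹ := one_lt_inv_iff₀.mpr ⟨hβ0, hβ1⟩
      linarith
  -- at-risk positivity at the last death before t
  have hκD : kk - 1 < DNum x d := by omega
  have hY : 1 ≤ Yb x j (uu x d ⟨kk - 1, hκD⟩) := by
    have huκt : uu x d ⟨kk - 1, hκD⟩ ≤ t := by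
      have : (⟨kk - 1, hκD⟩ : Fin (DNum x d)) ∈
          univ.filter (fun l : Fin (DNum x d) => uu x d l ≤ t) := by
        rw [hdc]
        simp
        omega
      simp only [mem_filter, mem_univ, true_and] at this
      exact this
    obtain ⟨a₀, hsup, hmax⟩ := sSup_range_attained hn (fun i => x (j i))
    have : uu x d ⟨kk - 1, hκD⟩ ≤ x (j a₀) := le_trans huκt (by rw [hsup] at htmax; exact htmax)
    have hpos : a₀ ∈ univ.filter (fun a => uu x d ⟨kk - 1, hκD⟩ ≤ x (j a)) := by
      simp only [mem_filter, mem_univ, true_and]; exact this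
    exact Finset.card_pos.mpr ⟨a₀, hpos⟩
  have hrange : kk - 1 + 1 = kk := by omega
  apply MM_of_bad x d β hβ0 j hκD hY
  rw [hrange]
  exact hlt

theorem core_bound {n : ℕ} (hn : 0 < n) (x d : Fin n → ℝ)
    (hd : ∀ a, d a = 0 ∨ d a = 1) (hx : ∀ a b, d a = 1 → x a = x b → a = b)
    (β : ℝ) (hβ0 : 0 < β) (hβ1 : β < 1) :
    1 - β ≤ (Set.ncard {j : Fin n → Fin n |
        ∀ t : ℝ, 0 ≤ t → t ≤ sSup (Set.range fun i => x (j i)) →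
          kmProd (fun i => x (j i)) (fun i => d (j i)) t ≤ β⁻¹ * kmProd x d t} : ℝ)
      / (n : ℝ) ^ n := by
  classical
  set p := fun j : Fin n → Fin n => ∀ t : ℝ, 0 ≤ t →
      t ≤ sSup (Set.range fun i => x (j i)) →
      kmProd (fun i => x (j i)) (fun i => d (j i)) t ≤ β⁻¹ * kmProd x d t with hp
  have hncard : ({j : Fin n → Fin n | p j}.ncard : ℕ) = (univ.filter p).card := by
    rw [Set.ncard_eq_toFinset_card']
    congr 1
    ext j
    simp [Set.mem_toFinset]
  have hcardfun : ((Fintype.card (Fin n → Fin n) : ℕ) : ℝ) = (n : ℝ) ^ n := by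
    rw [Fintype.card_fun]
    push_cast
    simp
  have hbad_bound : ((univ.filter (fun j => ¬ p j)).card : ℝ) ≤ β * (n : ℝ) ^ n := by
    have h1 : ∀ j ∈ univ.filter (fun j => ¬ p j),
        (1 : ℝ) ≤ β * MM x d β (DNum x d) j := by
      intro j hj
      rw [mem_filter] at hj
      have hMM := not_good_imp_bad hn x d hd hx β hβ0 hβ1 j hj.2
      have h2 : β * β⁻¹ = 1 := mul_inv_cancel₀ (ne_of_gt hβ0)
      nlinarith
    calc ((univ.filter (fun j => ¬ p j)).card : ℝ)
        = ∑ _j ∈ univ.filter (fun j => ¬ p j), (1 : ℝ) := by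
          rw [Finset.sum_const, nsmul_eq_mul, mul_one]
      _ ≤ ∑ j ∈ univ.filter (fun j => ¬ p j), β * MM x d β (DNum x d) j :=
          Finset.sum_le_sum h1
      _ ≤ ∑ j : Fin n → Fin n, β * MM x d β (DNum x d) j :=
          Finset.sum_le_sum_of_subset_of_nonneg (Finset.filter_subset _ _)
            (fun j _ _ => mul_nonneg hβ0.le (MM_nonneg x d β (DNum x d) j))
      _ = β * ∑ j : Fin n → Fin n, MM x d β (DNum x d) j := by rw [← Finset.mul_sum]
      _ = β * (n : ℝ) ^ n := by rw [MM_sum x d β (DNum x d), hcardfun]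
  have hsplit : (univ.filter p).card + (univ.filter (fun j => ¬ p j)).card
      = Fintype.card (Fin n → Fin n) := by
    rw [Finset.card_filter_add_card_filter_not, Finset.card_univ]
  have hnn_pos : (0 : ℝ) < (n : ℝ) ^ n := pow_pos (by exact_mod_cast hn) n
  rw [le_div_iff₀ hnn_pos]
  have hcast : ((univ.filter p).card : ℝ) + ((univ.filter (fun j => ¬ p j)).card : ℝ)
      = (n : ℝ) ^ n := by
    rw [← hcardfun]
    exact_mod_cast hsplit
  have : (({j : Fin n → Fin n | p j}.ncard : ℕ) : ℝ) = ((univ.filter p).card : ℝ) := by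
    exact_mod_cast hncard
  rw [this]
  nlinarith

open MeasureTheory ProbabilityTheory

lemma eq_null {Ω : Type*} [MeasurableSpace Ω] (P : Measure Ω) [IsProbabilityMeasure P]
    {X Y : Ω → ℝ} (hX : Measurable X) (hY : Measurable Y) (hind : IndepFun X Y P)
    (hatomY : ∀ c : ℝ, P.map Y {c} = 0) : P {ω | X ω = Y ω} = 0 := by
  have hmap := (indepFun_iff_map_prod_eq_prod_map_map hX.aemeasurable hY.aemeasurable).mp hind
  have hdiag : MeasurableSet {p : ℝ × ℝ | p.1 = p.2} :=
    (isClosed_eq continuous_fst continuous_snd).measurableSet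
  have hpre : {ω | X ω = Y ω} = (fun ω => (X ω, Y ω)) ⁻¹' {p : ℝ × ℝ | p.1 = p.2} := rfl
  rw [hpre, ← Measure.map_apply (hX.prodMk hY) hdiag, hmap,
    Measure.prod_apply hdiag]
  have hfib : ∀ c : ℝ, (Prod.mk c ⁻¹' {p : ℝ × ℝ | p.1 = p.2}) = {c} := by
    intro c
    ext y
    simp [eq_comm]
  rw [MeasureTheory.lintegral_congr (fun c => by rw [hfib c, hatomY c])]
  simp

lemma atom_zero {Ω : Type*} [MeasurableSpace Ω] (P : Measure Ω) [IsProbabilityMeasure P]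
    {X : Ω → ℝ} (hX : Measurable X) (S : ℝ → ℝ)
    (hS : ∀ t, S t = (P {ω | t < X ω}).toReal) (hScont : Continuous S) (c : ℝ) :
    P.map X {c} = 0 := by
  rw [Measure.map_apply hX (measurableSet_singleton c)]
  have hmeas : ∀ s : ℝ, MeasurableSet {ω | s < X ω} := by
    intro s
    exact hX measurableSet_Ioi
  have hkey : ∀ ε : ℝ, 0 < ε → (P (X ⁻¹' {c})).toReal ≤ ε := by
    intro ε hε
    have hc := Metric.continuousAt_iff.mp (hScont.continuousAt (x := c))
    obtain ⟨δ, hδ, hδε⟩ := hc ε hε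
    set s := c - δ / 2 with hs
    have hsc : s < c := by rw [hs]; linarith
    have hsub : X ⁻¹' {c} ⊆ {ω | s < X ω} \ {ω | c < X ω} := by
      intro ω hω
      simp only [Set.mem_preimage, Set.mem_singleton_iff] at hω
      constructor
      · simp only [Set.mem_setOf_eq, hω]; exact hsc
      · simp only [Set.mem_setOf_eq, hω]; exact lt_irrefl c
    have hmono : P {ω | c < X ω} ≤ P {ω | s < X ω} := by
      apply measure_mono
      intro ω hω
      simp only [Set.mem_setOf_eq] at hω ⊢
      linarith
    have hdiff : P ({ω | s < X ω} \ {ω | c < X ω}) = P {ω | s < X ω} - P {ω | c < X ω} :=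
      measure_diff (fun ω hω => by simp only [Set.mem_setOf_eq] at hω ⊢; linarith)
        (hmeas c).nullMeasurableSet (measure_ne_top P _)
    calc (P (X ⁻¹' {c})).toReal
        ≤ (P ({ω | s < X ω} \ {ω | c < X ω})).toReal := by
          apply ENNReal.toReal_mono
          · rw [hdiff]
            exact (tsub_le_self).trans_lt (measure_lt_top P _) |>.ne
          · exact measure_mono hsub
      _ = (P {ω | s < X ω}).toReal - (P {ω | c < X ω}).toReal := by
          rw [hdiff, ENNReal.toReal_sub_of_le hmono (measure_ne_top P _)]
      _ = S s - S c := by rw [hS s, hS c]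
      _ ≤ |S s - S c| := le_abs_self _
      _ ≤ ε := by
          have : dist s c < δ := by
            rw [Real.dist_eq, hs]
            rw [abs_of_nonpos (by linarith)]
            linarith
          have h2 := hδε this
          rw [Real.dist_eq] at h2
          exact h2.le
  have h0 : (P (X ⁻¹' {c})).toReal = 0 := by
    by_contra hne
    have hpos : 0 < (P (X ⁻¹' {c})).toReal :=
      lt_of_le_of_ne ENNReal.toReal_nonneg (Ne.symm hne)
    have := hkey ((P (X ⁻¹' {c})).toReal / 2) (by linarith)
    linarith
  rw [ENNReal.toReal_eq_zero_iff] at h0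
  rcases h0 with h0 | h0
  · exact h0
  · exact absurd h0 (measure_ne_top P _)


end Aux

end

open MeasureTheory Filter Finset ProbabilityTheory Set
open scoped ENNReal

noncomputable section

/-- Gill's Lemma 2.6(b), bootstrap version: for every `β ∈ (0,1)`, almost
surely, `P(S*ₙ(t) ≤ β⁻¹ Ŝₙ(t) for all t ∈ [0, T*ₙ] | 𝐗) ≥ 1 − β`.  The bootstrap sample is
`(x ∘ j, d ∘ j)` for a uniformly random resampling map `j : Fin n → Fin n` and
`T*ₙ = maxᵢ x (j i)`, so the conditional probability given the data is the proportion of the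
`nⁿ` resampling maps realizing the event. -/
theorem bootstrap_km_dominated_by_km
    {Ω : Type*} [MeasurableSpace Ω] (P : Measure Ω) [IsProbabilityMeasure P]
    (n : ℕ) (hn : 0 < n)
    (T C : Fin n → Ω → ℝ)
    (hTmeas : ∀ i, Measurable (T i)) (hCmeas : ∀ i, Measurable (C i))
    (hTpos : ∀ i, ∀ᵐ ω ∂P, 0 < T i ω) (hCpos : ∀ i, ∀ᵐ ω ∂P, 0 < C i ω)
    (hIndep : iIndepFun (Sum.elim T C) P)
    (hTid : ∀ i j, P.map (T i) = P.map (T j))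
    (hCid : ∀ i j, P.map (C i) = P.map (C j))
    (S : ℝ → ℝ)
    (hS : ∀ i t, S t = (P {ω | t < T i ω}).toReal)
    (hScont : Continuous S)
    (β : ℝ) (hβ : β ∈ Ioo (0 : ℝ) 1) :
    ∀ᵐ ω ∂P,
      1 - β ≤
        (Set.ncard {j : Fin n → Fin n |
            ∀ t : ℝ, 0 ≤ t →
              t ≤ sSup (Set.range fun i : Fin n => min (T (j i) ω) (C (j i) ω)) →
              kmProd (fun i : Fin n => min (T (j i) ω) (C (j i) ω))
                  (fun i : Fin n => if min (T (j i) ω) (C (j i) ω) = T (j i) ω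
                    then (1 : ℝ) else 0) t
                ≤ β⁻¹ * kmProd (fun i : Fin n => min (T i ω) (C i ω))
                    (fun i : Fin n => if min (T i ω) (C i ω) = T i ω then (1 : ℝ) else 0) t}
          : ℝ) / (n : ℝ) ^ n := by
  obtain ⟨hβ0, hβ1⟩ := hβ
  have hatomT : ∀ i : Fin n, ∀ c : ℝ, P.map (T i) {c} = 0 := fun i c =>
    atom_zero P (hTmeas i) S (fun t => hS i t) hScont c
  have hTT : ∀ a b : Fin n, a ≠ b → P {ω | T a ω = T b ω} = 0 := by
    intro a b hab
    have hind : IndepFun (T a) (T b) P := by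
      have := hIndep.indepFun (i := Sum.inl a) (j := Sum.inl b) (by simp [hab])
      simpa using this
    exact eq_null P (hTmeas a) (hTmeas b) hind (hatomT b)
  have hTC : ∀ a b : Fin n, P {ω | C b ω = T a ω} = 0 := by
    intro a b
    have hind : IndepFun (C b) (T a) P := by
      have := hIndep.indepFun (i := Sum.inr b) (j := Sum.inl a) (by simp)
      simpa using this
    exact eq_null P (hCmeas b) (hTmeas a) hind (hatomT a)
  have hE : ∀ᵐ ω ∂P, ∀ a b : Fin n, a ≠ b → T a ω ≠ T b ω ∧ T a ω ≠ C b ω := by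
    rw [MeasureTheory.ae_all_iff]
    intro a
    rw [MeasureTheory.ae_all_iff]
    intro b
    by_cases hab : a = b
    · exact MeasureTheory.ae_of_all _ (fun ω hne => absurd hab hne)
    · have h1' : ∀ᵐ ω ∂P, ¬ (T a ω = T b ω) := by
        rw [MeasureTheory.ae_iff]
        simp only [not_not]
        exact hTT a b hab
      have h2' : ∀ᵐ ω ∂P, ¬ (C b ω = T a ω) := by
        rw [MeasureTheory.ae_iff]
        simp only [not_not]
        exact hTC a b
      filter_upwards [h1', h2'] with ω hω1 hω2 _
      exact ⟨hω1, fun h => hω2 h.symm⟩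
  filter_upwards [hE] with ω hω
  refine core_bound hn (fun i => min (T i ω) (C i ω))
    (fun i => if min (T i ω) (C i ω) = T i ω then (1 : ℝ) else 0) ?_ ?_ β hβ0 hβ1
  · intro i
    by_cases h : min (T i ω) (C i ω) = T i ω <;> simp [h]
  · intro a b hda hab
    beta_reduce at hda hab
    by_contra hne
    have hda' : min (T a ω) (C a ω) = T a ω := by
      by_contra h
      rw [if_neg h] at hda
      norm_num at hda
    rw [hda'] at hab
    have hd2 := hω a b hne
    rcases min_choice (T b ω) (C b ω) with hmin | hmin
    · rw [hmin] at hab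
      exact hd2.1 hab
    · rw [hmin] at hab
      exact hd2.2 hab

end
end

section
/- For every β ∈ (0,1), almost surely: P( n⁻¹ #{ i : X*ᵢ ≥ t } ≥ β · n⁻¹ #{ i : Xᵢ ≥ t } for all t ≤ T*ₙ | 𝐗 ) ≥ 1 − (e/β)·exp(−1/β). -/
open MeasureTheory Filter Finset ProbabilityTheory Set
open scoped ENNReal

noncomputable section

namespace GillAux

/-- number of coordinates of `g` mapped (as naturals) below `r` -/
def Ncnt (n r : ℕ) (g : Fin n → Fin n) : ℕ :=
  (Finset.univ.filter fun l => (g l : ℕ) < r).card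

def isBad (n : ℕ) (β : ℝ) (r : ℕ) (g : Fin n → Fin n) : Prop :=
  1 ≤ Ncnt n r g ∧ (Ncnt n r g : ℝ) < β * r

instance (n : ℕ) (β : ℝ) (r : ℕ) (g : Fin n → Fin n) : Decidable (isBad n β r g) := by
  unfold isBad; infer_instance

/-- weight function on a single coordinate value -/
def wf (n : ℕ) (θ : ℝ) (ρ : ℕ) (v : Fin n) : ℝ := if (v : ℕ) < ρ then 1 - θ / ρ else 1

/-- martingale weight -/
def W (n : ℕ) (θ : ℝ) (r : ℕ) (g : Fin n → Fin n) : ℝ := (1 - θ / r) ^ (Ncnt n r g)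

lemma W_eq_prod (n : ℕ) (θ : ℝ) (r : ℕ) (g : Fin n → Fin n) :
    W n θ r g = ∏ l : Fin n, wf n θ r (g l) := by
  classical
  unfold W wf Ncnt
  rw [← Finset.prod_filter_mul_prod_filter_not Finset.univ (fun l => (g l : ℕ) < r)]
  rw [Finset.prod_congr rfl (fun l hl => if_pos (Finset.mem_filter.mp hl).2),
      Finset.prod_congr rfl (fun l hl => if_neg (Finset.mem_filter.mp hl).2)]
  simp

lemma card_filter_val_lt (n m : ℕ) (hm : m ≤ n) :
    (Finset.univ.filter fun v : Fin n => (v : ℕ) < m).card = m := by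
  classical
  rw [← Finset.card_range m]
  apply Finset.card_bij (fun (v : Fin n) _ => (v : ℕ))
  · intro v hv; simpa using (Finset.mem_filter.mp hv).2
  · intro a ha b hb h; exact Fin.val_injective h
  · intro a ha
    refine ⟨⟨a, lt_of_lt_of_le (Finset.mem_range.mp ha) hm⟩, ?_, rfl⟩
    simp [Finset.mem_range.mp ha]

/-- trace: what is known at "reverse time" r: membership below r, exact values above -/
def tr (n r : ℕ) (g : Fin n → Fin n) : Fin n → Option (Fin n) :=
  fun l => if (g l : ℕ) < r then none else some (g l)

lemma Ncnt_eq_of_tr_eq {n r : ℕ} {g g' : Fin n → Fin n}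
    (h : tr n r g = tr n r g') {r' : ℕ} (hr' : r ≤ r') :
    Ncnt n r' g = Ncnt n r' g' := by
  classical
  unfold Ncnt
  congr 1
  apply Finset.filter_congr
  intro l _
  have hl := congrFun h l
  unfold tr at hl
  by_cases h1 : (g l : ℕ) < r
  · rw [if_pos h1] at hl
    by_cases h2 : (g' l : ℕ) < r
    · constructor <;> intro _
      · exact lt_of_lt_of_le h2 hr'
      · exact lt_of_lt_of_le h1 hr'
    · rw [if_neg h2] at hl; exact absurd hl (by simp)
  · rw [if_neg h1] at hl
    by_cases h2 : (g' l : ℕ) < r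
    · rw [if_pos h2] at hl; exact absurd hl (by simp)
    · rw [if_neg h2] at hl
      have : g l = g' l := by injection hl
      rw [this]

/-- KEY IDENTITY: one reverse-martingale step.  If membership in `S` only depends on the
trace at level `r+1`, then the sum of `W` at level `r` over `S` equals that at `r+1`. -/
lemma sum_W_step (n : ℕ) (θ : ℝ) (r : ℕ) (hr : 1 ≤ r) (hrn : r + 1 ≤ n)
    (S : Finset (Fin n → Fin n))
    (hS : ∀ g g', tr n (r+1) g = tr n (r+1) g' → (g ∈ S ↔ g' ∈ S)) :
    ∑ g ∈ S, W n θ r g = ∑ g ∈ S, W n θ (r+1) g := by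
  classical
  have hmaps : ∀ g ∈ S, tr n (r+1) g ∈ S.image (tr n (r+1)) :=
    fun g hg => Finset.mem_image_of_mem _ hg
  rw [← Finset.sum_fiberwise_of_maps_to hmaps (W n θ r),
      ← Finset.sum_fiberwise_of_maps_to hmaps (W n θ (r+1))]
  apply Finset.sum_congr rfl
  intro b hb
  obtain ⟨g₀, hg₀S, hg₀⟩ := Finset.mem_image.mp hb
  set V : Option (Fin n) → Finset (Fin n) :=
    fun o => o.elim (Finset.univ.filter fun v : Fin n => (v : ℕ) < r + 1) (fun v => {v})
    with hV
  -- the fiber is a product set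
  have hfiber : S.filter (fun g => tr n (r+1) g = b)
      = Fintype.piFinset (fun l => V (b l)) := by
    ext g
    simp only [Finset.mem_filter, Fintype.mem_piFinset]
    constructor
    · rintro ⟨hgS, hgb⟩ l
      have hgl := congrFun hgb l
      unfold tr at hgl
      by_cases h1 : (g l : ℕ) < r + 1
      · rw [if_pos h1] at hgl; rw [← hgl]; simp [hV, h1]; omega
      · rw [if_neg h1] at hgl; rw [← hgl]; simp [hV]
    · intro hmem
      have htr : tr n (r+1) g = b := by
        funext l
        have hl := hmem l
        have hl0 := congrFun hg₀ l
        unfold tr at hl0 ⊢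
        cases hbl : b l with
        | none =>
          rw [hbl] at hl; simp [hV] at hl
          simp [hl, hbl]
        | some v =>
          rw [hbl] at hl hl0; simp [hV] at hl
          subst hl
          by_cases h2 : (g₀ l : ℕ) < r + 1
          · rw [if_pos h2] at hl0; exact absurd hl0 (by simp)
          · rw [if_neg h2] at hl0
            have hgg : g₀ l = g l := by injection hl0
            rw [← hgg, if_neg h2]
      exact ⟨(hS g g₀ (htr.trans hg₀.symm)).mpr hg₀S, htr⟩
  have hsum : ∀ ρ : ℕ,
      ∑ g ∈ S.filter (fun g => tr n (r+1) g = b), W n θ ρ g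
        = ∏ l : Fin n, ∑ v ∈ V (b l), wf n θ ρ v := by
    intro ρ
    rw [hfiber]
    rw [Finset.sum_congr rfl (fun g (_ : g ∈ Fintype.piFinset (fun l => V (b l))) =>
      W_eq_prod n θ ρ g)]
    exact (Finset.prod_univ_sum (fun l => V (b l)) (fun _ v => wf n θ ρ v)).symm
  rw [hsum r, hsum (r+1)]
  apply Finset.prod_congr rfl
  intro l _
  cases hbl : b l with
  | some v =>
    have hl0 := congrFun hg₀ l
    unfold tr at hl0
    rw [hbl] at hl0
    by_cases h2 : (g₀ l : ℕ) < r + 1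
    · rw [if_pos h2] at hl0; exact absurd hl0 (by simp)
    · rw [if_neg h2] at hl0
      have hv : ¬ ((v : ℕ) < r + 1) := by
        have hgv : g₀ l = v := by injection hl0
        rwa [hgv] at h2
      simp only [hV, Option.elim, Finset.sum_singleton]
      unfold wf
      rw [if_neg (fun h => hv (by omega)), if_neg hv]
  | none =>
    simp only [hV, Option.elim]
    have hcard1 : (Finset.univ.filter fun v : Fin n => (v : ℕ) < r + 1).card = r + 1 :=
      card_filter_val_lt n (r+1) hrn
    have hcard2 : (Finset.univ.filter fun v : Fin n => (v : ℕ) < r).card = r :=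
      card_filter_val_lt n r (by omega)
    have he1 : (Finset.univ.filter fun v : Fin n => (v : ℕ) < r + 1).filter
        (fun v : Fin n => (v : ℕ) < r) = Finset.univ.filter fun v : Fin n => (v : ℕ) < r := by
      rw [Finset.filter_filter]
      apply Finset.filter_congr; intro v _
      constructor
      · exact fun h => h.2
      · exact fun h => ⟨by omega, h⟩
    have hc2 : ((Finset.univ.filter fun v : Fin n => (v : ℕ) < r + 1).filter
        (fun v : Fin n => ¬ (v : ℕ) < r)).card = 1 := by
      have := Finset.card_filter_add_card_filter_not
        (s := Finset.univ.filter fun v : Fin n => (v : ℕ) < r + 1)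
        (p := fun v : Fin n => (v : ℕ) < r)
      rw [he1, hcard2, hcard1] at this
      omega
    have hRHS : ∑ v ∈ (Finset.univ.filter fun v : Fin n => (v : ℕ) < r + 1), wf n θ (r+1) v
        = (r + 1 : ℝ) * (1 - θ / (r+1)) := by
      simp only [wf]
      rw [Finset.sum_ite_of_true (fun v hv => (Finset.mem_filter.mp hv).2),
        Finset.sum_const, hcard1, nsmul_eq_mul]
      push_cast; ring
    have hLHS : ∑ v ∈ (Finset.univ.filter fun v : Fin n => (v : ℕ) < r + 1), wf n θ r v
        = (r : ℝ) * (1 - θ / r) + 1 := by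
      simp only [wf]
      rw [Finset.sum_ite, Finset.sum_const, Finset.sum_const, he1, hcard2, hc2,
        nsmul_eq_mul, nsmul_eq_mul]
      push_cast; ring
    rw [hLHS, hRHS]
    have hr0 : (r : ℝ) ≠ 0 := Nat.cast_ne_zero.mpr (by omega)
    have hr1 : (r : ℝ) + 1 ≠ 0 := by positivity
    field_simp
    ring

/-- ANALYTIC STEP: on a bad state the martingale weight is at least `β`. -/
lemma beta_le_W {β : ℝ} (hβ0 : 0 < β) (hβ1 : β < 1) (r N : ℕ)
    (h1 : 1 ≤ N) (h2 : (N : ℝ) < β * r) :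
    β ≤ (1 - ((1 - β) / β) / r) ^ N := by
  set θ : ℝ := (1 - β) / β with hθ
  have hθpos : 0 < θ := div_pos (by linarith) hβ0
  have hβr : 1 < β * r := lt_of_le_of_lt (by exact_mod_cast h1) h2
  have hrpos : (0 : ℝ) < r := by nlinarith
  have hrinv : 1 / β < r := by rw [div_lt_iff₀ hβ0]; linarith [mul_comm β (r : ℝ)]
  set u : ℝ := θ / r with hu
  have hupos : 0 < u := div_pos hθpos hrpos
  have hult : u < 1 - β := by
    rw [hu, div_lt_iff₀ hrpos, hθ]
    calc (1 - β) / β = (1 - β) * (1 / β) := by ring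
    _ < (1 - β) * r := by
        apply mul_lt_mul_of_pos_left hrinv (by linarith)
  set t : ℝ := u / (1 - β) with ht
  have htpos : 0 < t := div_pos hupos (by linarith)
  have htlt : t < 1 := by rw [ht, div_lt_one (by linarith)]; exact hult
  have h1u : 0 < 1 - u := by linarith
  -- concavity of log
  have hconc := (strictConcaveOn_log_Ioi.concaveOn).2
    (Set.mem_Ioi.mpr one_pos) (Set.mem_Ioi.mpr hβ0)
    (show (0:ℝ) ≤ 1 - t by linarith) (le_of_lt htpos) (by ring)
  have hcomb : (1 - t) • (1 : ℝ) + t • β = 1 - u := by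
    simp only [smul_eq_mul]
    have : t * (1 - β) = u := by
      rw [ht, div_mul_cancel₀ u (show (1:ℝ) - β ≠ 0 by linarith)]
    nlinarith [this]
  rw [hcomb] at hconc
  simp only [smul_eq_mul, Real.log_one, mul_zero, zero_add] at hconc
  -- hconc : t * Real.log β ≤ Real.log (1 - u)
  have hlogneg : Real.log (1 - u) ≤ 0 := Real.log_nonpos (by linarith) (by linarith)
  have hNle : (N : ℝ) ≤ β * r := le_of_lt h2
  have hkey : Real.log β ≤ (N : ℝ) * Real.log (1 - u) := by
    have e1 : β * r * t = 1 := by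
      rw [ht, hu, hθ]
      field_simp
      exact div_self (by nlinarith)
    have h3 : β * r * (t * Real.log β) ≤ β * r * Real.log (1 - u) :=
      mul_le_mul_of_nonneg_left hconc (by positivity)
    have h4 : β * r * Real.log (1 - u) ≤ (N : ℝ) * Real.log (1 - u) :=
      mul_le_mul_of_nonpos_right hNle hlogneg
    calc Real.log β = β * r * (t * Real.log β) := by
          rw [show β * r * (t * Real.log β) = (β * r * t) * Real.log β by ring, e1, one_mul]
      _ ≤ (N : ℝ) * Real.log (1 - u) := le_trans h3 h4
  calc β = Real.exp (Real.log β) := (Real.exp_log hβ0).symm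
    _ ≤ Real.exp ((N : ℝ) * Real.log (1 - u)) := Real.exp_le_exp.mpr hkey
    _ = Real.exp (Real.log (1 - u)) ^ N := Real.exp_nat_mul _ N
    _ = (1 - u) ^ N := by rw [Real.exp_log h1u]

instance (n : ℕ) (β : ℝ) (r : ℕ) :
    DecidablePred (fun g : Fin n → Fin n => ∀ r' ∈ Finset.Icc (r+1) n, ¬ isBad n β r' g) := by
  intro g; infer_instance

instance (n : ℕ) (β : ℝ) (r : ℕ) :
    DecidablePred (fun g : Fin n → Fin n =>
      isBad n β r g ∧ ∀ r' ∈ Finset.Icc (r+1) n, ¬ isBad n β r' g) := by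
  intro g; infer_instance

instance (n : ℕ) (β : ℝ) :
    DecidablePred (fun g : Fin n → Fin n => ∃ r ∈ Finset.Icc 1 n, isBad n β r g) := by
  intro g; infer_instance

/-- `g`'s with no bad level in `(r, n]` -/
def Dset (n : ℕ) (β : ℝ) (r : ℕ) : Finset (Fin n → Fin n) :=
  Finset.univ.filter fun g => ∀ r' ∈ Finset.Icc (r+1) n, ¬ isBad n β r' g

/-- `g`'s whose largest bad level is exactly `r` -/
def Cset (n : ℕ) (β : ℝ) (r : ℕ) : Finset (Fin n → Fin n) :=
  Finset.univ.filter fun g =>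
    isBad n β r g ∧ ∀ r' ∈ Finset.Icc (r+1) n, ¬ isBad n β r' g

lemma mem_Dset {n : ℕ} {β : ℝ} {r : ℕ} {g : Fin n → Fin n} :
    g ∈ Dset n β r ↔ ∀ r' ∈ Finset.Icc (r+1) n, ¬ isBad n β r' g := by
  simp [Dset]

lemma mem_Cset {n : ℕ} {β : ℝ} {r : ℕ} {g : Fin n → Fin n} :
    g ∈ Cset n β r ↔ isBad n β r g ∧ ∀ r' ∈ Finset.Icc (r+1) n, ¬ isBad n β r' g := by
  simp [Cset]

lemma main_base (n : ℕ) (β θ : ℝ) :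
    β * ∑ r' ∈ Finset.Icc (n+1) n, ((Cset n β r').card : ℝ)
      + ∑ g ∈ Dset n β n, W n θ n g
    = (n : ℝ) ^ n * (1 - θ / n) ^ n := by
  rw [Finset.Icc_eq_empty (by omega), Finset.sum_empty, mul_zero, zero_add]
  have hD : Dset n β n = Finset.univ := by
    ext g
    simp only [mem_Dset, Finset.mem_univ, iff_true]
    intro r' hr'
    exact absurd (Finset.mem_Icc.mp hr') (by omega)
  have hW : ∀ g : Fin n → Fin n, W n θ n g = (1 - θ / n) ^ n := by
    intro g
    unfold W Ncnt
    congr 1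
    have hfil : (Finset.univ.filter fun l => ((g l : ℕ) < n)) = Finset.univ := by
      ext l; simpa using (g l).isLt
    rw [hfil, Finset.card_univ, Fintype.card_fin]
  rw [hD, Finset.sum_congr rfl (fun g _ => hW g), Finset.sum_const, Finset.card_univ,
    Fintype.card_fun, Fintype.card_fin, nsmul_eq_mul, Nat.cast_pow]

lemma main_ind (n : ℕ) {β : ℝ} (hβ0 : 0 < β) (hβ1 : β < 1) (r : ℕ)
    (hr1 : 1 ≤ r) (hrn : r ≤ n) :
    β * ∑ r' ∈ Finset.Icc (r+1) n, ((Cset n β r').card : ℝ)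
      + ∑ g ∈ Dset n β r, W n ((1-β)/β) r g
    ≤ (n : ℝ) ^ n * (1 - ((1-β)/β) / n) ^ n := by
  set θ : ℝ := (1 - β) / β with hθ
  suffices H : ∀ d r, 1 ≤ r → r ≤ n → n - r ≤ d →
      β * ∑ r' ∈ Finset.Icc (r+1) n, ((Cset n β r').card : ℝ)
        + ∑ g ∈ Dset n β r, W n θ r g
      ≤ (n : ℝ) ^ n * (1 - θ / n) ^ n by
    exact H n r hr1 hrn (by omega)
  intro d
  induction d with
  | zero =>
    intro r h1 h2 h3
    rw [show r = n from by omega]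
    exact le_of_eq (main_base n β θ)
  | succ d ih =>
    intro r h1 h2 h3
    by_cases hc : r = n
    · rw [hc]; exact le_of_eq (main_base n β θ)
    · have hrn' : r + 1 ≤ n := by omega
      have ihr := ih (r+1) (by omega) hrn' (by omega)
      -- key martingale step
      have key : ∑ g ∈ Dset n β r, W n θ r g = ∑ g ∈ Dset n β r, W n θ (r+1) g := by
        apply sum_W_step n θ r h1 hrn'
        intro g g' htr
        have hiff : ∀ r' ∈ Finset.Icc (r+1) n, (isBad n β r' g ↔ isBad n β r' g') := by
          intro r' hr'
          unfold isBad
          rw [Ncnt_eq_of_tr_eq htr (Finset.mem_Icc.mp hr').1]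
        simp only [mem_Dset]
        constructor
        · intro h r' hr'; exact fun hb => h r' hr' ((hiff r' hr').mpr hb)
        · intro h r' hr'; exact fun hb => h r' hr' ((hiff r' hr').mp hb)
      -- split Dset (r+1)
      have hIccM : ∀ g : Fin n → Fin n,
          (∀ r' ∈ Finset.Icc (r+1) n, ¬ isBad n β r' g)
          ↔ (¬ isBad n β (r+1) g ∧ ∀ r' ∈ Finset.Icc (r+2) n, ¬ isBad n β r' g) := by
        intro g
        constructor
        · intro h
          refine ⟨h (r+1) (Finset.mem_Icc.mpr (by omega)), fun r' hr' => h r' ?_⟩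
          have := Finset.mem_Icc.mp hr'
          exact Finset.mem_Icc.mpr (by omega)
        · rintro ⟨h1, h2⟩ r' hr'
          have hb := Finset.mem_Icc.mp hr'
          rcases eq_or_lt_of_le hb.1 with he | hl
          · rwa [← he]
          · exact h2 r' (Finset.mem_Icc.mpr (by omega))
      have hdisj : Disjoint (Cset n β (r+1)) (Dset n β r) := by
        rw [Finset.disjoint_left]
        intro g hg1 hg2
        have h1 : isBad n β (r+1) g := (mem_Cset.mp hg1).1
        have h2 := mem_Dset.mp hg2
        exact ((hIccM g).mp h2).1 h1
      have hunion : Dset n β (r+1) = Cset n β (r+1) ∪ Dset n β r := by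
        ext g
        simp only [Finset.mem_union, mem_Cset, mem_Dset, hIccM g]
        by_cases hb : isBad n β (r+1) g <;> tauto
      have hsplit : ∑ g ∈ Cset n β (r+1), W n θ (r+1) g + ∑ g ∈ Dset n β r, W n θ (r+1) g
          = ∑ g ∈ Dset n β (r+1), W n θ (r+1) g := by
        rw [hunion, Finset.sum_union hdisj]
      -- each g in Cset (r+1) has weight ≥ β
      have hCb : β * ((Cset n β (r+1)).card : ℝ) ≤ ∑ g ∈ Cset n β (r+1), W n θ (r+1) g := by
        rw [mul_comm, ← nsmul_eq_mul]
        apply Finset.card_nsmul_le_sum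
        intro g hg
        have hbad : isBad n β (r+1) g := (mem_Cset.mp hg).1
        exact beta_le_W hβ0 hβ1 (r+1) (Ncnt n (r+1) g) hbad.1 hbad.2
      -- split the Icc sum
      have hIcc : ∑ r' ∈ Finset.Icc (r+1) n, ((Cset n β r').card : ℝ)
          = ((Cset n β (r+1)).card : ℝ) + ∑ r' ∈ Finset.Icc (r+2) n, ((Cset n β r').card : ℝ) := by
        have : Finset.Icc (r+1) n = insert (r+1) (Finset.Icc (r+2) n) := by
          ext r'; simp only [Finset.mem_Icc, Finset.mem_insert]; omega
        rw [this, Finset.sum_insert (by simp [Finset.mem_Icc])]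
      rw [hIcc, key]
      nlinarith [ihr, hCb, hsplit]

lemma core (n : ℕ) {β : ℝ} (hβ0 : 0 < β) (hβ1 : β < 1) :
    ((Finset.univ.filter fun g : Fin n → Fin n =>
        ∃ r ∈ Finset.Icc 1 n, isBad n β r g).card : ℝ)
      ≤ ((Real.exp 1 / β) * Real.exp (-1 / β)) * (n : ℝ) ^ n := by
  set θ : ℝ := (1 - β) / β with hθ
  have hθpos : 0 < θ := div_pos (by linarith) hβ0
  have hconst : (Real.exp 1 / β) * Real.exp (-1 / β) = Real.exp (-θ) / β := by
    have hθβ : θ * β = 1 - β := by rw [hθ]; field_simp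
    rw [div_mul_eq_mul_div, ← Real.exp_add]
    congr 2
    field_simp
    linarith [hθβ]
  set m : ℕ := Nat.floor (1/β) with hm
  have hm1 : 1 ≤ m := Nat.le_floor (by
    rw [Nat.cast_one, le_div_iff₀ hβ0, one_mul]; linarith)
  have hmle : (m : ℝ) ≤ 1/β := Nat.floor_le (by positivity)
  have hmgt : 1/β < (m : ℝ) + 1 := Nat.lt_floor_add_one _
  have hbad_gt : ∀ r : ℕ, ∀ g : Fin n → Fin n, isBad n β r g → m < r := by
    intro r g hb
    have h1 : (1 : ℝ) ≤ (Ncnt n r g : ℝ) := by exact_mod_cast hb.1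
    have h2 : (1:ℝ) < β * r := lt_of_le_of_lt h1 hb.2
    have : 1/β < (r : ℝ) := by rw [div_lt_iff₀ hβ0]; linarith [mul_comm β (r:ℝ)]
    have : (m : ℝ) < (r : ℝ) := lt_of_le_of_lt hmle this
    exact_mod_cast this
  by_cases hcase : n ≤ m
  · have : (Finset.univ.filter fun g : Fin n → Fin n =>
        ∃ r ∈ Finset.Icc 1 n, isBad n β r g) = ∅ := by
      apply Finset.filter_false_of_mem
      rintro g _ ⟨r, hr, hb⟩
      have := hbad_gt r g hb
      have := (Finset.mem_Icc.mp hr).2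
      omega
    rw [this]
    simp only [Finset.card_empty, Nat.cast_zero]
    positivity
  · push_neg at hcase
    have hmn : m ≤ n := le_of_lt hcase
    have hmain := main_ind n hβ0 hβ1 m hm1 hmn
    rw [← hθ] at hmain
    have hθm : θ < (m : ℝ) := by
      have : θ = 1/β - 1 := by rw [hθ]; field_simp
      rw [this]; linarith
    -- Dset sum is nonnegative
    have hDnn : 0 ≤ ∑ g ∈ Dset n β m, W n θ m g := by
      apply Finset.sum_nonneg
      intro g _
      apply pow_nonneg
      have hmpos : (0:ℝ) < m := by exact_mod_cast hm1
      rw [sub_nonneg, div_le_one hmpos]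
      linarith
    -- the bad set is covered by the Csets
    have hcover : (Finset.univ.filter fun g : Fin n → Fin n =>
        ∃ r ∈ Finset.Icc 1 n, isBad n β r g)
        ⊆ (Finset.Icc (m+1) n).biUnion (fun r => Cset n β r) := by
      intro g hg
      obtain ⟨r, hr, hbr⟩ := (Finset.mem_filter.mp hg).2
      set s : Finset ℕ := (Finset.Icc 1 n).filter (fun r' => isBad n β r' g) with hs
      have hne : s.Nonempty := ⟨r, Finset.mem_filter.mpr ⟨hr, hbr⟩⟩
      set r' := s.max' hne with hr'
      have hmem : r' ∈ s := s.max'_mem hne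
      have hr'I : r' ∈ Finset.Icc 1 n := (Finset.mem_filter.mp hmem).1
      have hr'bad : isBad n β r' g := (Finset.mem_filter.mp hmem).2
      apply Finset.mem_biUnion.mpr
      refine ⟨r', Finset.mem_Icc.mpr ⟨?_, (Finset.mem_Icc.mp hr'I).2⟩, ?_⟩
      · have := hbad_gt r' g hr'bad; omega
      · apply mem_Cset.mpr
        refine ⟨hr'bad, ?_⟩
        intro r'' hr'' hbad''
        have hIc := Finset.mem_Icc.mp hr''
        have : r'' ∈ s := Finset.mem_filter.mpr ⟨Finset.mem_Icc.mpr ⟨by omega, hIc.2⟩, hbad''⟩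
        have := s.le_max' r'' this
        omega
    have hcard : ((Finset.univ.filter fun g : Fin n → Fin n =>
        ∃ r ∈ Finset.Icc 1 n, isBad n β r g).card : ℝ)
        ≤ ∑ r' ∈ Finset.Icc (m+1) n, ((Cset n β r').card : ℝ) := by
      have h1 := Finset.card_le_card hcover
      have h2 := Finset.card_biUnion_le (s := Finset.Icc (m+1) n) (t := fun r => Cset n β r)
      have := le_trans h1 h2
      push_cast
      exact_mod_cast this
    -- RHS bound by exp
    have hnpos : (0:ℝ) < n := by
      have : 0 < n := by omega
      exact_mod_cast this
    have hexp : (1 - θ / n) ^ n ≤ Real.exp (-θ) := by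
      have hnne : (n:ℝ) ≠ 0 := ne_of_gt hnpos
      have h1 : 1 - θ / n ≤ Real.exp (-(θ/n)) := by
        have := Real.add_one_le_exp (-(θ/n))
        linarith
      have h0 : 0 ≤ 1 - θ / n := by
        rw [sub_nonneg, div_le_one hnpos]
        have : (m:ℝ) ≤ n := by exact_mod_cast hmn
        linarith
      calc (1 - θ / n) ^ n ≤ Real.exp (-(θ/n)) ^ n := pow_le_pow_left₀ h0 h1 n
        _ = Real.exp ((n : ℝ) * (-(θ/n))) := (Real.exp_nat_mul _ n).symm
        _ = Real.exp (-θ) := by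
            congr 1
            field_simp
    have hfinal : β * ((Finset.univ.filter fun g : Fin n → Fin n =>
        ∃ r ∈ Finset.Icc 1 n, isBad n β r g).card : ℝ) ≤ (n:ℝ)^n * Real.exp (-θ) := by
      calc β * _ ≤ β * ∑ r' ∈ Finset.Icc (m+1) n, ((Cset n β r').card : ℝ) :=
            mul_le_mul_of_nonneg_left hcard (le_of_lt hβ0)
        _ ≤ (n : ℝ) ^ n * (1 - θ / n) ^ n := by linarith
        _ ≤ (n:ℝ)^n * Real.exp (-θ) := by
            apply mul_le_mul_of_nonneg_left hexp (by positivity)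
    rw [hconst, div_mul_eq_mul_div, le_div_iff₀ hβ0]
    calc ((Finset.univ.filter fun g : Fin n → Fin n =>
        ∃ r ∈ Finset.Icc 1 n, isBad n β r g).card : ℝ) * β
        = β * _ := mul_comm _ _
      _ ≤ (n:ℝ)^n * Real.exp (-θ) := hfinal
      _ = Real.exp (-θ) * (n:ℝ)^n := mul_comm _ _

/-- down-closed subsets of `Fin n` are initial segments -/
lemma mem_iff_lt_card {n : ℕ} (s : Finset (Fin n))
    (hdc : ∀ p q : Fin n, p ≤ q → q ∈ s → p ∈ s) (p : Fin n) :
    p ∈ s ↔ (p : ℕ) < s.card := by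
  constructor
  · intro hp
    have hsub : Finset.Iic p ⊆ s := fun q hq => hdc q p (Finset.mem_Iic.mp hq) hp
    have := Finset.card_le_card hsub
    rw [Fin.card_Iic] at this; omega
  · intro hp
    by_contra hps
    have hsub : s ⊆ Finset.Iio p := by
      intro q hq
      rw [Finset.mem_Iio]
      rcases lt_or_ge q p with h | h
      · exact h
      · exact absurd (hdc p q h hq) hps
    have := Finset.card_le_card hsub
    rw [Fin.card_Iio] at this; omega

end GillAux

open GillAux

/-- Gill's Lemma 2.7(b), bootstrap version: for every `β ∈ (0,1)`, almost
surely, `P( n⁻¹#{i : X*ᵢ ≥ t} ≥ β n⁻¹#{i : Xᵢ ≥ t} for all t ≤ T*ₙ | 𝐗 )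
≥ 1 − (e/β) exp(−1/β)`.  The bootstrap sample is `X*ᵢ = X (j i)` for a uniformly random
resampling map `j : Fin n → Fin n` and `T*ₙ = maxᵢ X*ᵢ`, so the conditional probability given
the data is the proportion of the `nⁿ` resampling maps realizing the event. -/
theorem bootstrap_empirical_survival_lower_bound
    {Ω : Type*} [MeasurableSpace Ω] (P : Measure Ω) [IsProbabilityMeasure P]
    (n : ℕ) (hn : 0 < n)
    (X : Fin n → Ω → ℝ)
    (β : ℝ) (hβ : β ∈ Ioo (0 : ℝ) 1) :
    ∀ᵐ ω ∂P,
      1 - (Real.exp 1 / β) * Real.exp (-1 / β) ≤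
        (Set.ncard {j : Fin n → Fin n |
            ∀ t : ℝ, t ≤ sSup (Set.range fun i : Fin n => X (j i) ω) →
              β * (((Finset.univ.filter (fun k : Fin n => t ≤ X k ω)).card : ℝ) / (n : ℝ))
                ≤ ((Finset.univ.filter (fun k : Fin n => t ≤ X (j k) ω)).card : ℝ) / (n : ℝ)}
          : ℝ) / (n : ℝ) ^ n := by
  obtain ⟨hβ0, hβ1⟩ := hβ
  apply Filter.Eventually.of_forall
  intro ω
  have hnR : (0:ℝ) < (n:ℝ) := by exact_mod_cast hn
  have hnpow : (0:ℝ) < (n:ℝ)^n := by positivity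
  set S : Set (Fin n → Fin n) := {j : Fin n → Fin n |
      ∀ t : ℝ, t ≤ sSup (Set.range fun i : Fin n => X (j i) ω) →
        β * (((Finset.univ.filter (fun k : Fin n => t ≤ X k ω)).card : ℝ) / (n : ℝ))
          ≤ ((Finset.univ.filter (fun k : Fin n => t ≤ X (j k) ω)).card : ℝ) / (n : ℝ)}
    with hSdef
  set perm : Equiv.Perm (Fin n) := Tuple.sort (fun i => -X i ω) with hperm
  have hmono : Monotone ((fun i => -X i ω) ∘ ⇑perm) := Tuple.monotone_sort _
  -- characterization of the level sets via the sorting permutation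
  have hval : ∀ (t : ℝ) (i : Fin n),
      t ≤ X i ω ↔ ((perm.symm i : ℕ)
        < (Finset.univ.filter (fun k : Fin n => t ≤ X k ω)).card) := by
    intro t i
    have hdc : ∀ p q : Fin n, p ≤ q →
        q ∈ (Finset.univ.filter fun p : Fin n => t ≤ X (perm p) ω) →
        p ∈ (Finset.univ.filter fun p : Fin n => t ≤ X (perm p) ω) := by
      intro p q hpq hq
      simp only [Finset.mem_filter, Finset.mem_univ, true_and] at hq ⊢
      have := hmono hpq
      simp only [Function.comp_apply] at this
      linarith
    have hmem := GillAux.mem_iff_lt_card _ hdc (perm.symm i)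
    simp only [Finset.mem_filter, Finset.mem_univ, true_and,
      Equiv.apply_symm_apply] at hmem
    have hcard : (Finset.univ.filter fun p : Fin n => t ≤ X (perm p) ω).card
        = (Finset.univ.filter fun k : Fin n => t ≤ X k ω).card := by
      apply Finset.card_bij (fun p _ => perm p)
      · intro p hp
        simp only [Finset.mem_filter, Finset.mem_univ, true_and] at hp ⊢
        exact hp
      · intro a _ b _ h
        exact perm.injective h
      · intro k hk
        refine ⟨perm.symm k, ?_, by simp⟩
        simp only [Finset.mem_filter, Finset.mem_univ, true_and,
          Equiv.apply_symm_apply] at hk ⊢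
        exact hk
    rw [hcard] at hmem
    exact hmem
  -- the complement of the good event maps injectively into the core bad set
  have hbadmap : ∀ j : Fin n → Fin n, j ∉ S →
      (⇑perm.symm ∘ j) ∈ (Finset.univ.filter fun g : Fin n → Fin n =>
        ∃ r ∈ Finset.Icc 1 n, isBad n β r g) := by
    intro j hj
    simp only [hSdef, Set.mem_setOf_eq] at hj
    push_neg at hj
    obtain ⟨t, ht, hlt⟩ := hj
    set kc := (Finset.univ.filter (fun k : Fin n => t ≤ X k ω)).card with hkc
    set mc := (Finset.univ.filter (fun k : Fin n => t ≤ X (j k) ω)).card with hmc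
    have hmlt : (mc:ℝ) < β * kc := by
      have h2 : (mc:ℝ)/n < (β*kc)/n := by
        rw [← mul_div_assoc] at hlt
        exact hlt
      have := (div_lt_div_iff_of_pos_right hnR).mp h2
      exact this
    have hne : (Set.range fun i : Fin n => X (j i) ω).Nonempty :=
      ⟨X (j ⟨0, hn⟩) ω, ⟨⟨0, hn⟩, rfl⟩⟩
    obtain ⟨i₀, hi₀⟩ := hne.csSup_mem (Set.finite_range _)
    have hti₀ : t ≤ X (j i₀) ω := ht.trans (le_of_eq hi₀.symm)
    have hm1 : 1 ≤ mc := Finset.card_pos.mpr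
      ⟨i₀, Finset.mem_filter.mpr ⟨Finset.mem_univ _, hti₀⟩⟩
    have hk1 : 1 ≤ kc := by
      obtain ⟨l, hl⟩ := Finset.card_pos.mp hm1
      have hl' := (Finset.mem_filter.mp hl).2
      exact Finset.card_pos.mpr ⟨j l, Finset.mem_filter.mpr ⟨Finset.mem_univ _, hl'⟩⟩
    have hkn : kc ≤ n := by
      have := Finset.card_filter_le (Finset.univ : Finset (Fin n))
        (fun k : Fin n => t ≤ X k ω)
      simpa using this
    have hN : Ncnt n kc (⇑perm.symm ∘ j) = mc := by
      unfold Ncnt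
      rw [hmc]
      congr 1
      apply Finset.filter_congr
      intro l _
      rw [Function.comp_apply]
      exact (hval t (j l)).symm
    refine Finset.mem_filter.mpr ⟨Finset.mem_univ _,
      ⟨kc, Finset.mem_Icc.mpr ⟨hk1, hkn⟩, ?_, ?_⟩⟩
    · rw [hN]; exact hm1
    · rw [hN]; exact hmlt
  -- counting
  have hinj : Function.Injective (fun j : Fin n → Fin n => ⇑perm.symm ∘ j) :=
    fun a b h => funext fun l => perm.symm.injective (congrFun h l)
  have hsub : ((fun j : Fin n → Fin n => ⇑perm.symm ∘ j) '' Sᶜ)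
      ⊆ ↑(Finset.univ.filter fun g : Fin n → Fin n =>
        ∃ r ∈ Finset.Icc 1 n, isBad n β r g) := by
    rintro _ ⟨j, hj, rfl⟩
    exact hbadmap j hj
  have h1 : ((Sᶜ.ncard : ℕ) : ℝ) ≤ ((Finset.univ.filter fun g : Fin n → Fin n =>
      ∃ r ∈ Finset.Icc 1 n, isBad n β r g).card : ℝ) := by
    have h := Set.ncard_le_ncard hsub (Set.toFinite _)
    rw [Set.ncard_image_of_injective _ hinj, Set.ncard_coe_finset] at h
    exact_mod_cast h
  have hcore := core n hβ0 hβ1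
  have hcomp : S.ncard + Sᶜ.ncard = n ^ n := by
    rw [Set.ncard_add_ncard_compl, Nat.card_eq_fintype_card, Fintype.card_fun,
      Fintype.card_fin]
  rw [le_div_iff₀ hnpow]
  have hcompR : (S.ncard : ℝ) + (Sᶜ.ncard : ℝ) = (n:ℝ) ^ n := by
    have := congrArg (fun x : ℕ => (x : ℝ)) hcomp
    push_cast at this
    exact this
  nlinarith [h1, hcore, hcompR]

end
end

section
/- Let τ > 0 and let h, Z : [0,τ] → ℝ be right-continuous step functions, each with finitely many discontinuities and constant between discontinuities, such that h is non-negative and non-increasing with h(0) = 1, and Z(0) = 0. Define U(s) = Σ_{u ∈ (0,s]} h(u)·(Z(u) − Z(u−)) (the sum over the jump points of Z in (0,s]). Then for all t ≤ τ: sup_{s∈[0,t]} h(s)|Z(s)| ≤ 2 · sup_{s∈(0,t]} |U(s)|. -/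
open Finset Set Function

noncomputable section

/-- adaptation of Gill's Lemma 2.9 to jump processes: let `h, Z` be
right-continuous step functions on `[0,τ]` (constant between their finitely many
discontinuities, listed in the finite sets `Dh`, `DZ ⊆ (0,τ]`) such that `h` is non-negative
and non-increasing with `h 0 = 1` and `Z 0 = 0`.  With
`U(s) = Σ_{u ∈ DZ, u ≤ s} h(u)(Z(u) − Z(u−))` (the integral `∫₀^s h dZ`), one has, for all
`t ≤ τ`, `sup_{s∈[0,t]} h(s)|Z(s)| ≤ 2 sup_{s∈(0,t]} |U(s)|`. -/
theorem weighted_jump_process_sup_bound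
    (τ : ℝ) (hτ : 0 < τ)
    (h Z : ℝ → ℝ)
    (Dh DZ : Finset ℝ) (hDh : ↑Dh ⊆ Ioc (0 : ℝ) τ) (hDZ : ↑DZ ⊆ Ioc (0 : ℝ) τ)
    -- h and Z are constant on any subinterval of [0,τ] containing none of their jump points
    (hstep : ∀ a b : ℝ, 0 ≤ a → a ≤ b → b ≤ τ → (∀ u ∈ Dh, u ∉ Ioc a b) → h a = h b)
    (Zstep : ∀ a b : ℝ, 0 ≤ a → a ≤ b → b ≤ τ → (∀ u ∈ DZ, u ∉ Ioc a b) → Z a = Z b)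
    (hnonneg : ∀ s ∈ Icc (0 : ℝ) τ, 0 ≤ h s)
    (hanti : AntitoneOn h (Icc 0 τ))
    (h0 : h 0 = 1) (Z0 : Z 0 = 0) :
    ∀ t ≤ τ, ∀ s ∈ Icc (0 : ℝ) t,
      h s * |Z s| ≤
        2 * sSup ((fun s' => |∑ u ∈ DZ.filter (fun u => u ≤ s'),
            h u * (Z u - leftLim Z u)|) '' Ioc 0 t) := by
  intro t ht s hs
  obtain ⟨hs0, hst⟩ := hs
  have hsτ : s ≤ τ := hst.trans ht
  set U : ℝ → ℝ := fun r => ∑ u ∈ DZ.filter (fun u => u ≤ r),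
      h u * (Z u - leftLim Z u) with hUdef
  set A : Set ℝ := (fun s' => |∑ u ∈ DZ.filter (fun u => u ≤ s'),
      h u * (Z u - leftLim Z u)|) '' Ioc 0 t with hAdef
  set M : ℝ := sSup A with hMdef
  -- A is finite, hence bounded above
  have hAfin : A.Finite := by
    apply Set.Finite.subset (Set.Finite.image
      (fun T : Finset ℝ => |∑ u ∈ T, h u * (Z u - leftLim Z u)|)
      (DZ.powerset : Finset (Finset ℝ)).finite_toSet)
    rintro x ⟨s', _, rfl⟩
    refine ⟨DZ.filter (fun u => u ≤ s'), ?_, rfl⟩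
    simp only [Finset.mem_coe, Finset.mem_powerset]
    exact Finset.filter_subset _ _
  have hbdd : BddAbove A := hAfin.bddAbove
  have hM0 : 0 ≤ M := by
    rcases Set.eq_empty_or_nonempty A with hA | ⟨x, hx⟩
    · rw [hMdef, hA, Real.sSup_empty]
    · refine le_trans ?_ (le_csSup hbdd hx)
      obtain ⟨s', _, rfl⟩ := hx
      positivity
  -- |U r| ≤ M for r ∈ [0, t]
  have hUM : ∀ r, 0 ≤ r → r ≤ t → |U r| ≤ M := by
    intro r hr0 hrt
    rcases eq_or_lt_of_le hr0 with hr | hr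
    · have : DZ.filter (fun u => u ≤ r) = ∅ := by
        rw [Finset.filter_eq_empty_iff]
        intro u hu
        have := hDZ hu
        simp only [Set.mem_Ioc] at this
        push_neg
        linarith [this.1]
      simp [hUdef, this, hM0]
    · exact le_csSup hbdd ⟨r, ⟨hr, hrt⟩, rfl⟩
  -- trivial case: h s = 0
  rcases le_or_gt (h s) 0 with hhs | hhs
  · have : h s = 0 := le_antisymm hhs (hnonneg s ⟨hs0, hsτ⟩)
    rw [this, zero_mul]
    linarith
  -- main claim by strong induction on the number of jumps of Z up to r
  have claim : ∀ m : ℕ, ∀ r, 0 ≤ r → r ≤ s → (DZ.filter (fun u => u ≤ r)).card ≤ m →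
      |h r * Z r - U r| ≤ (1 - h r) * M := by
    intro m
    induction m with
    | zero =>
      intro r hr0 hrs hcard
      have hF : DZ.filter (fun u => u ≤ r) = ∅ := Finset.card_eq_zero.mp (Nat.le_zero.mp hcard)
      have hrτ : r ≤ τ := hrs.trans hsτ
      have hZr : Z r = 0 := by
        rw [← Z0]
        refine (Zstep 0 r le_rfl hr0 hrτ ?_).symm
        intro u hu hmem
        have : u ∈ DZ.filter (fun u => u ≤ r) := Finset.mem_filter.mpr ⟨hu, hmem.2⟩
        simp [hF] at this
      have hUr : U r = 0 := by simp [hUdef, hF]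
      have hr1 : h r ≤ 1 := by
        rw [← h0]
        exact hanti ⟨le_rfl, le_of_lt hτ⟩ ⟨hr0, hrτ⟩ hr0
      rw [hZr, hUr]
      simp only [mul_zero, sub_zero, abs_zero]
      exact mul_nonneg (by linarith) hM0
    | succ m ih =>
      intro r hr0 hrs hcard
      set F := DZ.filter (fun u => u ≤ r) with hFdef
      rcases F.eq_empty_or_nonempty with hF | hF
      · -- same as the base case
        have hrτ : r ≤ τ := hrs.trans hsτ
        have hZr : Z r = 0 := by
          rw [← Z0]
          refine (Zstep 0 r le_rfl hr0 hrτ ?_).symm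
          intro u hu hmem
          have : u ∈ F := Finset.mem_filter.mpr ⟨hu, hmem.2⟩
          simp [hF] at this
        have hUr : U r = 0 := by simp [hUdef, ← hFdef, hF]
        have hr1 : h r ≤ 1 := by
          rw [← h0]
          exact hanti ⟨le_rfl, le_of_lt hτ⟩ ⟨hr0, hrτ⟩ hr0
        rw [hZr, hUr]
        simp only [mul_zero, sub_zero, abs_zero]
        exact mul_nonneg (by linarith) hM0
      · set p := F.max' hF with hpdef
        have hpF : p ∈ F := F.max'_mem hF
        obtain ⟨hpDZ, hpr⟩ := Finset.mem_filter.mp hpF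
        have hpIoc : p ∈ Ioc (0 : ℝ) τ := hDZ hpDZ
        have hp0 : 0 < p := hpIoc.1
        have hrτ : r ≤ τ := hrs.trans hsτ
        set G := DZ.filter (fun u => u < p) with hGdef
        -- the previous jump point (or 0)
        obtain ⟨q, hq0, hqp, hGq, hqchar⟩ :
            ∃ q, 0 ≤ q ∧ q < p ∧ DZ.filter (fun u => u ≤ q) = G ∧
              ∀ u ∈ DZ, u < p → u ≤ q := by
          rcases G.eq_empty_or_nonempty with hG | hG
          · refine ⟨0, le_rfl, hp0, ?_, ?_⟩
            · rw [hG, Finset.filter_eq_empty_iff]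
              intro u hu
              have := (hDZ hu).1
              push_neg
              linarith
            · intro u hu hup
              exfalso
              have : u ∈ G := Finset.mem_filter.mpr ⟨hu, hup⟩
              simp [hG] at this
          · refine ⟨G.max' hG, ?_, ?_, ?_, ?_⟩
            · have := (hDZ (Finset.mem_filter.mp (G.max'_mem hG)).1).1
              linarith
            · exact (Finset.mem_filter.mp (G.max'_mem hG)).2
            · ext u
              simp only [Finset.mem_filter, hGdef]
              constructor
              · rintro ⟨hu, huq⟩
                exact ⟨hu, lt_of_le_of_lt huq (Finset.mem_filter.mp (G.max'_mem hG)).2⟩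
              · rintro ⟨hu, hup⟩
                exact ⟨hu, G.le_max' u (Finset.mem_filter.mpr ⟨hu, hup⟩)⟩
            · intro u hu hup
              exact G.le_max' u (Finset.mem_filter.mpr ⟨hu, hup⟩)
        have hqs : q ≤ s := le_trans (le_of_lt (lt_of_lt_of_le hqp hpr)) hrs
        have hqτ : q ≤ τ := hqs.trans hsτ
        have hps : p ≤ s := hpr.trans hrs
        have hpτ : p ≤ τ := hps.trans hsτ
        -- cardinality decreases
        have hcardq : (DZ.filter (fun u => u ≤ q)).card ≤ m := by
          rw [hGq]
          have hsub : G ⊆ F.erase p := by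
            intro u hu
            obtain ⟨hu1, hu2⟩ := Finset.mem_filter.mp hu
            exact Finset.mem_erase.mpr ⟨ne_of_lt hu2,
              Finset.mem_filter.mpr ⟨hu1, le_of_lt (lt_of_lt_of_le hu2 hpr)⟩⟩
          calc G.card ≤ (F.erase p).card := Finset.card_le_card hsub
            _ = F.card - 1 := Finset.card_erase_of_mem hpF
            _ ≤ (m + 1) - 1 := Nat.sub_le_sub_right hcard 1
            _ = m := rfl
        have IH := ih q hq0 hqs hcardq
        -- leftLim Z p = Z q
        have hll : leftLim Z p = Z q := by
          apply leftLim_eq_of_tendsto (h := nhdsLT_neBot p)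
          apply Filter.Tendsto.congr' _ tendsto_const_nhds
          filter_upwards [Ioo_mem_nhdsLT_of_mem (Set.mem_Ioc.mpr ⟨hqp, le_rfl⟩)] with x hx
          refine Zstep q x hq0 (le_of_lt hx.1) (le_trans (le_of_lt hx.2) hpτ) ?_
          intro u hu hmem
          have := hqchar u hu (lt_of_le_of_lt hmem.2 hx.2)
          linarith [hmem.1]
        -- Z r = Z p
        have hZr : Z r = Z p := by
          refine (Zstep p r (le_of_lt hp0) hpr hrτ ?_).symm
          intro u hu hmem
          have : u ∈ F := Finset.mem_filter.mpr ⟨hu, hmem.2⟩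
          linarith [F.le_max' u this, hmem.1]
        -- F = insert p G, so U r = h p * (Z p - Z q) + U q
        have hFins : F = insert p G := by
          ext u
          simp only [hFdef, hGdef, Finset.mem_filter, Finset.mem_insert]
          constructor
          · rintro ⟨hu, hur⟩
            rcases eq_or_lt_of_le (F.le_max' u (Finset.mem_filter.mpr ⟨hu, hur⟩)) with he | hl
            · exact Or.inl he
            · exact Or.inr ⟨hu, hl⟩
          · rintro (rfl | ⟨hu, hup⟩)
            · exact ⟨hpDZ, hpr⟩
            · exact ⟨hu, le_of_lt (lt_of_lt_of_le hup hpr)⟩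
        have hpG : p ∉ G := by simp [hGdef]
        have hUr : U r = h p * (Z p - Z q) + U q := by
          have hsplit : DZ.filter (fun u => u ≤ r) = insert p (DZ.filter (fun u => u ≤ q)) := by
            rw [hGq, ← hFdef]; exact hFins
          have hpnot : p ∉ DZ.filter (fun u => u ≤ q) := by rw [hGq]; exact hpG
          show (∑ u ∈ DZ.filter (fun u => u ≤ r), h u * (Z u - leftLim Z u)) = _
          rw [hsplit, Finset.sum_insert hpnot, hll]
        -- h values
        have hhr : 0 < h r := lt_of_lt_of_le hhs (hanti ⟨hr0, hrτ⟩ ⟨hs0, hsτ⟩ hrs)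
        have hhpr : h r ≤ h p := hanti ⟨le_of_lt hp0, hpτ⟩ ⟨hr0, hrτ⟩ hpr
        have hhqp : h p ≤ h q := hanti ⟨hq0, hqτ⟩ ⟨le_of_lt hp0, hpτ⟩ (le_of_lt hqp)
        have hhq1 : h q ≤ 1 := by
          rw [← h0]
          exact hanti ⟨le_rfl, le_of_lt hτ⟩ ⟨hq0, hqτ⟩ hq0
        have hhp : 0 < h p := lt_of_lt_of_le hhr hhpr
        have hhq : 0 < h q := lt_of_lt_of_le hhp hhqp
        -- U bounds
        have hUqM : |U q| ≤ M := hUM q hq0 (hqs.trans hst)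
        have hUrM : |U r| ≤ M := hUM r hr0 (hrs.trans hst)
        -- the key algebraic identity
        set a := h r / h q with hadef
        set b := h r / h p with hbdef
        have ha0 : 0 ≤ a := le_of_lt (div_pos hhr hhq)
        have hab : a ≤ b := div_le_div_of_nonneg_left (le_of_lt hhr) hhp hhqp
        have hb1 : b ≤ 1 := (div_le_one hhp).mpr hhpr
        have hahq : a * h q = h r := div_mul_cancel₀ _ (ne_of_gt hhq)
        have key : h r * Z r - U r =
            a * (h q * Z q - U q) + (a - b) * U q + (b - 1) * U r := by
          rw [hZr, hUr, hadef, hbdef]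
          field_simp
          ring
        have e1 : |a * (h q * Z q - U q)| ≤ a * ((1 - h q) * M) := by
          rw [abs_mul, abs_of_nonneg ha0]
          exact mul_le_mul_of_nonneg_left IH ha0
        have e2 : |(a - b) * U q| ≤ (b - a) * M := by
          rw [abs_mul, abs_of_nonpos (by linarith), neg_sub]
          exact mul_le_mul_of_nonneg_left hUqM (by linarith)
        have e3 : |(b - 1) * U r| ≤ (1 - b) * M := by
          rw [abs_mul, abs_of_nonpos (by linarith), neg_sub]
          exact mul_le_mul_of_nonneg_left hUrM (by linarith)
        have final : a * ((1 - h q) * M) + (b - a) * M + (1 - b) * M = (1 - h r) * M := by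
          rw [← hahq]; ring
        calc |h r * Z r - U r|
            = |a * (h q * Z q - U q) + (a - b) * U q + (b - 1) * U r| := by rw [key]
          _ ≤ |a * (h q * Z q - U q)| + |(a - b) * U q| + |(b - 1) * U r| := abs_add_three _ _ _
          _ ≤ a * ((1 - h q) * M) + (b - a) * M + (1 - b) * M := by linarith
          _ = (1 - h r) * M := final
  -- conclude
  have hclaim := claim (DZ.filter (fun u => u ≤ s)).card s hs0 le_rfl le_rfl
  have hUsM : |U s| ≤ M := hUM s hs0 hst
  have habs : h s * |Z s| = |h s * Z s| := by
    rw [abs_mul, abs_of_nonneg (le_of_lt hhs)]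
  rw [habs]
  have hs1 : h s ≤ 1 := by
    rw [← h0]
    exact hanti ⟨le_rfl, le_of_lt hτ⟩ ⟨hs0, hsτ⟩ hs0
  have : |h s * Z s| ≤ |h s * Z s - U s| + |U s| := by
    have := abs_add_le (h s * Z s - U s) (U s)
    simpa using this
  nlinarith [mul_nonneg (le_of_lt hhs) hM0]

end
end

section
/- Let k ∈ ℕ, let 1 ≥ h₁ ≥ h₂ ≥ … ≥ h_k ≥ 0 be reals and z₁,…,z_k ∈ ℝ. Define Z_j = Σ_{i=1}^j zᵢ and U_j = Σ_{i=1}^j hᵢ zᵢ for 1 ≤ j ≤ k. Then for every j ∈ {1,…,k}: h_j · |Z_j| ≤ 2 · max_{1 ≤ m ≤ j} |U_m|. -/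
open Finset

/-- Key invariant: `|h n * Z n - U n| ≤ max_{m ≤ n} |U m|` for antitone nonnegative `h : ℕ → ℝ`. -/
lemma discrete_weighted_key (h z : ℕ → ℝ) (hanti : Antitone h) (hnn : ∀ i, 0 ≤ h i) (n : ℕ) :
    |h n * (∑ i ∈ Finset.Iic n, z i) - ∑ i ∈ Finset.Iic n, h i * z i|
      ≤ (Finset.Iic n).sup' Finset.nonempty_Iic
          (fun m => |∑ i ∈ Finset.Iic m, h i * z i|) := by
  induction n with
  | zero =>
      have h0 : Finset.Iic (0 : ℕ) = {0} := by ext i; simp [Nat.le_zero]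
      simp [h0]
      positivity
  | succ n ih =>
      have hsub : Finset.Iic n ⊆ Finset.Iic (n + 1) :=
        Finset.Iic_subset_Iic.mpr (Nat.le_succ n)
      have hsup : (Finset.Iic n).sup' Finset.nonempty_Iic
            (fun m => |∑ i ∈ Finset.Iic m, h i * z i|)
          ≤ (Finset.Iic (n + 1)).sup' Finset.nonempty_Iic
            (fun m => |∑ i ∈ Finset.Iic m, h i * z i|) :=
        Finset.sup'_mono _ hsub Finset.nonempty_Iic
      have hUn : |∑ i ∈ Finset.Iic n, h i * z i|
          ≤ (Finset.Iic n).sup' Finset.nonempty_Iic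
            (fun m => |∑ i ∈ Finset.Iic m, h i * z i|) :=
        Finset.le_sup' (b := n) (fun m => |∑ i ∈ Finset.Iic m, h i * z i|)
          (Finset.mem_Iic.mpr le_rfl)
      have hins : Finset.Iic (n + 1) = insert (n + 1) (Finset.Iic n) := by
        ext i; simp [Nat.le_succ_iff]; omega
      have hnotmem : (n + 1) ∉ Finset.Iic n := by simp
      have hZ : ∑ i ∈ Finset.Iic (n + 1), z i = z (n + 1) + ∑ i ∈ Finset.Iic n, z i := by
        rw [hins, Finset.sum_insert hnotmem]
      have hU : ∑ i ∈ Finset.Iic (n + 1), h i * z i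
          = h (n + 1) * z (n + 1) + ∑ i ∈ Finset.Iic n, h i * z i := by
        rw [hins, Finset.sum_insert hnotmem]
      set Z := ∑ i ∈ Finset.Iic n, z i with hZdef
      set U := ∑ i ∈ Finset.Iic n, h i * z i with hUdef
      have hLHS : h (n + 1) * (∑ i ∈ Finset.Iic (n + 1), z i)
            - ∑ i ∈ Finset.Iic (n + 1), h i * z i
          = h (n + 1) * Z - U := by
        rw [hZ, hU]; ring
      rw [hLHS]
      refine le_trans ?_ hsup
      rcases eq_or_lt_of_le (hnn n) with hzero | hpos
      · have h1 : h (n + 1) = 0 :=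
          le_antisymm (by simpa [← hzero] using hanti (Nat.le_succ n)) (hnn (n + 1))
        simpa [h1] using hUn
      · -- h n > 0
        set r := h (n + 1) / h n with hrdef
        have hr0 : 0 ≤ r := div_nonneg (hnn _) (le_of_lt hpos)
        have hr1 : r ≤ 1 := (div_le_one hpos).mpr (hanti (Nat.le_succ n))
        have hdecomp : h (n + 1) * Z - U = r * (h n * Z - U) + (r - 1) * U := by
          have hrh : r * h n = h (n + 1) := by
            rw [hrdef]; exact div_mul_cancel₀ _ (ne_of_gt hpos)
          linear_combination (-Z) * hrh
        rw [hdecomp]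
        set S := (Finset.Iic n).sup' Finset.nonempty_Iic
          (fun m => |∑ i ∈ Finset.Iic m, h i * z i|) with hSdef
        calc |r * (h n * Z - U) + (r - 1) * U|
            ≤ |r * (h n * Z - U)| + |(r - 1) * U| := abs_add_le _ _
          _ = r * |h n * Z - U| + (1 - r) * |U| := by
              rw [abs_mul, abs_mul, abs_of_nonneg hr0, abs_of_nonpos (by linarith : r - 1 ≤ 0)]
              ring
          _ ≤ r * S + (1 - r) * S := by
              have e1 : r * |h n * Z - U| ≤ r * S := mul_le_mul_of_nonneg_left ih hr0
              have e2 : (1 - r) * |U| ≤ (1 - r) * S :=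
                mul_le_mul_of_nonneg_left hUn (by linarith)
              linarith
          _ = S := by ring

/-- discrete core of Gill's Lemma 2.9: for reals
`1 ≥ h 0 ≥ h 1 ≥ … ≥ h (k-1) ≥ 0` and `z i ∈ ℝ`, with partial sums `Z_j = Σ_{i≤j} z i` and
weighted partial sums `U_j = Σ_{i≤j} h i * z i`, one has
`h j * |Z_j| ≤ 2 * max_{m ≤ j} |U_m|` for every `j`. -/
theorem discrete_weighted_partial_sum_bound
    (k : ℕ) (h z : Fin k → ℝ)
    (hanti : Antitone h) (hle : ∀ i, h i ≤ 1) (hnonneg : ∀ i, 0 ≤ h i)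
    (j : Fin k) :
    h j * |∑ i ∈ Finset.Iic j, z i|
      ≤ 2 * (Finset.Iic j).sup' Finset.nonempty_Iic
          (fun m => |∑ i ∈ Finset.Iic m, h i * z i|) := by
  set h' : ℕ → ℝ := fun i => if hi : i < k then h ⟨i, hi⟩ else 0 with hh'
  set z' : ℕ → ℝ := fun i => if hi : i < k then z ⟨i, hi⟩ else 0 with hz'
  have hanti' : Antitone h' := by
    intro a b hab
    by_cases hb : b < k
    · have ha : a < k := lt_of_le_of_lt hab hb
      simp only [hh', dif_pos ha, dif_pos hb]
      exact hanti (show (⟨a, ha⟩ : Fin k) ≤ ⟨b, hb⟩ from hab)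
    · simp only [hh', dif_neg hb]
      by_cases ha : a < k
      · simp only [dif_pos ha]; exact hnonneg _
      · simp [dif_neg ha]
  have hnn' : ∀ i, 0 ≤ h' i := by
    intro i
    by_cases hi : i < k
    · simp only [hh', dif_pos hi]; exact hnonneg _
    · simp [hh', dif_neg hi]
  have hfz : ∀ i : Fin k, z' i.val = z i := by
    intro i; simp [hz', i.isLt]
  have hfhz : ∀ i : Fin k, h' i.val * z' i.val = h i * z i := by
    intro i; simp [hh', hz', i.isLt]
  have hsum : ∀ (f : Fin k → ℝ) (f' : ℕ → ℝ),
      (∀ i : Fin k, f' i.val = f i) → ∀ m : Fin k,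
      ∑ i ∈ Finset.Iic m, f i = ∑ i ∈ Finset.Iic (m : ℕ), f' i := by
    intro f f' hf m
    rw [← Fin.map_valEmbedding_Iic, Finset.sum_map]
    exact Finset.sum_congr rfl fun i _ => (hf i).symm
  have hZeq : ∑ i ∈ Finset.Iic j, z i = ∑ i ∈ Finset.Iic (j : ℕ), z' i := hsum z z' hfz j
  have hUeq : ∀ m : Fin k, ∑ i ∈ Finset.Iic m, h i * z i
      = ∑ i ∈ Finset.Iic (m : ℕ), h' i * z' i :=
    hsum (fun i => h i * z i) (fun i => h' i * z' i) hfhz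
  set SF := (Finset.Iic j).sup' Finset.nonempty_Iic
      (fun m => |∑ i ∈ Finset.Iic m, h i * z i|) with hSF
  set M := (Finset.Iic (j : ℕ)).sup' Finset.nonempty_Iic
      (fun m => |∑ i ∈ Finset.Iic m, h' i * z' i|) with hM
  -- M ≤ SF
  have hMle : M ≤ SF := by
    rw [hM]
    refine Finset.sup'_le _ _ (fun m hm => ?_)
    have hmj : m ≤ (j : ℕ) := Finset.mem_Iic.mp hm
    have hmk : m < k := lt_of_le_of_lt hmj j.isLt
    have hmem : (⟨m, hmk⟩ : Fin k) ∈ Finset.Iic j := Finset.mem_Iic.mpr hmj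
    have : |∑ i ∈ Finset.Iic (⟨m, hmk⟩ : Fin k), h i * z i| ≤ SF :=
      Finset.le_sup' (fun m => |∑ i ∈ Finset.Iic m, h i * z i|) hmem
    rwa [hUeq ⟨m, hmk⟩] at this
  have hkey := discrete_weighted_key h' z' hanti' hnn' (j : ℕ)
  have hUj : |∑ i ∈ Finset.Iic (j : ℕ), h' i * z' i| ≤ M :=
    Finset.le_sup' (b := (j : ℕ)) (fun m => |∑ i ∈ Finset.Iic m, h' i * z' i|)
      (Finset.mem_Iic.mpr le_rfl)
  have hhj : h' (j : ℕ) = h j := by simp [hh', j.isLt]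
  have habs : h j * |∑ i ∈ Finset.Iic j, z i|
      = |h' (j : ℕ) * (∑ i ∈ Finset.Iic (j : ℕ), z' i)| := by
    rw [abs_mul, hhj, abs_of_nonneg (hnonneg j), hZeq]
  rw [habs]
  have htri : |h' (j : ℕ) * (∑ i ∈ Finset.Iic (j : ℕ), z' i)|
      ≤ |h' (j : ℕ) * (∑ i ∈ Finset.Iic (j : ℕ), z' i)
          - ∑ i ∈ Finset.Iic (j : ℕ), h' i * z' i|
        + |∑ i ∈ Finset.Iic (j : ℕ), h' i * z' i| := by
    have := abs_sub_abs_le_abs_sub (h' (j : ℕ) * (∑ i ∈ Finset.Iic (j : ℕ), z' i))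
      (∑ i ∈ Finset.Iic (j : ℕ), h' i * z' i)
    linarith
  calc |h' (j : ℕ) * (∑ i ∈ Finset.Iic (j : ℕ), z' i)|
      ≤ _ + _ := htri
    _ ≤ M + M := add_le_add hkey hUj
    _ ≤ SF + SF := add_le_add hMle hMle
    _ = 2 * SF := by ring
end
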